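/- arXiv:2401.09842 — 6 statements merged into one kernel-verified Lean document; each statement's English description precedes it below -/
import Mathlib

section
/- For every real number s > 1, there exists an odd positive integer a such that the difference σ_s(an+2) − σ_s((a+1)n+1) changes sign infinitely often; that is, both the set {n ∈ ℕ : σ_s(an+2) < σ_s((a+1)n+1)} and the set {n ∈ ℕ : σ_s(an+2) > σ_s((a+1)n+1)} are infinite. (In particular, the answer to Pongsriiam's Problem 3.7 is negative: sign changes of σ_s(an+b) − σ_s(cn+d) occurring infinitely often does not force a = c.) -/
open Finset

/-- The generalized sum-of-divisors function `σ_s(n) = ∑_{d ∣ n} d^s` for a real exponent `s`. -/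
noncomputable def sigmaR (s : ℝ) (n : ℕ) : ℝ := ∑ d ∈ n.divisors, (d : ℝ) ^ s

lemma sigmaR_ge (s : ℝ) (hs : 0 ≤ s) {m : ℕ} (hm : 0 < m) : (m : ℝ) ^ s ≤ sigmaR s m := by
  apply Finset.single_le_sum (f := fun d : ℕ => (d : ℝ) ^ s)
  · intro i _
    exact Real.rpow_nonneg (by positivity) s
  · exact Nat.mem_divisors_self m hm.ne'

lemma sigmaR_prime (s : ℝ) {p : ℕ} (hp : p.Prime) : sigmaR s p = 1 + (p : ℝ) ^ s := by
  rw [sigmaR, hp.divisors, Finset.sum_pair hp.one_lt.ne]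
  simp [Real.one_rpow]

lemma sigmaR_ge_even (s : ℝ) {m : ℕ} (hm : 2 ∣ m) (h4 : 2 ≤ m) :
    (m : ℝ) ^ s + ((m : ℝ) / 2) ^ s ≤ sigmaR s m := by
  have hm0 : m ≠ 0 := by omega
  have hhalf : m / 2 ∈ m.divisors := Nat.mem_divisors.mpr ⟨Nat.div_dvd_of_dvd hm, hm0⟩
  have hne : m ≠ m / 2 := by omega
  have hsub : ({m, m / 2} : Finset ℕ) ⊆ m.divisors := by
    intro d hd
    simp only [Finset.mem_insert, Finset.mem_singleton] at hd
    rcases hd with h | h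
    · rw [h]; exact Nat.mem_divisors_self m hm0
    · rw [h]; exact hhalf
  have hcast : ((m / 2 : ℕ) : ℝ) = (m : ℝ) / 2 := by
    obtain ⟨k, rfl⟩ := hm
    rw [Nat.mul_div_cancel_left k (by norm_num)]
    push_cast
    ring
  calc (m : ℝ) ^ s + ((m : ℝ) / 2) ^ s
      = ∑ d ∈ ({m, m / 2} : Finset ℕ), (d : ℝ) ^ s := by
        rw [Finset.sum_pair hne, hcast]
    _ ≤ sigmaR s m := Finset.sum_le_sum_of_subset_of_nonneg hsub
        (fun i _ _ => Real.rpow_nonneg (by positivity) s)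

/-- Key real inequality for the first direction. -/
lemma ineqA {s x y : ℝ} (hs : 1 < s) (hx : 2 ≤ x) (hxy : x + 2 ≤ y) :
    1 + x ^ s < y ^ s := by
  have hx0 : (0 : ℝ) < x := by linarith
  have hy0 : (0 : ℝ) < y := by linarith
  have hxs1 : (1 : ℝ) ≤ x ^ (s - 1) := Real.one_le_rpow (by linarith) (by linarith)
  have hxs : x * x ^ (s - 1) = x ^ s := by
    calc x * x ^ (s - 1) = x ^ (1 : ℝ) * x ^ (s - 1) := by rw [Real.rpow_one]
      _ = x ^ (1 + (s - 1)) := (Real.rpow_add hx0 _ _).symm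
      _ = x ^ s := by ring_nf
  have key : y * x ^ (s - 1) ≤ y ^ s := by
    calc y * x ^ (s - 1) ≤ y * y ^ (s - 1) := by
          apply mul_le_mul_of_nonneg_left _ hy0.le
          exact Real.rpow_le_rpow hx0.le (by linarith) (by linarith)
      _ = y ^ (1 : ℝ) * y ^ (s - 1) := by rw [Real.rpow_one]
      _ = y ^ (1 + (s - 1)) := (Real.rpow_add hy0 _ _).symm
      _ = y ^ s := by ring_nf
  have hstep : (x + 2) * x ^ (s - 1) ≤ y * x ^ (s - 1) :=
    mul_le_mul_of_nonneg_right hxy (by linarith)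
  have hexp : (x + 2) * x ^ (s - 1) = x ^ s + 2 * x ^ (s - 1) := by
    rw [← hxs]; ring
  linarith

/-- Key real inequality for the second direction. -/
lemma ineqB {s x y A : ℝ} (hs : 1 < s) (hx : 4 ≤ x) (hy : 0 < y) (hA : 1 ≤ A)
    (hay : A * y ≤ (A + 1) * x) (hk : (1 + 1 / A) ^ s < 1 + (2 : ℝ) ^ (-s) / 2) :
    1 + y ^ s < x ^ s + (x / 2) ^ s := by
  have hs0 : (0 : ℝ) ≤ s := by linarith
  set c : ℝ := (2 : ℝ) ^ (-s) with hc_def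
  have hc : 0 < c := Real.rpow_pos_of_pos two_pos _
  have hA0 : (0 : ℝ) < A := by linarith
  have hx0 : (0 : ℝ) < x := by linarith
  have hxs0 : (0 : ℝ) < x ^ s := Real.rpow_pos_of_pos hx0 s
  have hyx : y ≤ x * (1 + 1 / A) := by
    have heq : A * (x * (1 + 1 / A)) = (A + 1) * x := by
      field_simp
    have : A * y ≤ A * (x * (1 + 1 / A)) := by rw [heq]; exact hay
    exact le_of_mul_le_mul_left this hA0
  have hys2 : y ^ s < x ^ s * (1 + c / 2) := by
    calc y ^ s ≤ (x * (1 + 1 / A)) ^ s := Real.rpow_le_rpow hy.le hyx hs0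
      _ = x ^ s * (1 + 1 / A) ^ s := Real.mul_rpow hx0.le (by positivity)
      _ < x ^ s * (1 + c / 2) := (mul_lt_mul_iff_right₀ hxs0).mpr hk
  have hhalf : (x / 2) ^ s = x ^ s * c := by
    rw [hc_def, Real.div_rpow hx0.le (by norm_num), Real.rpow_neg (by norm_num)]
    ring
  have hbig : 2 ≤ x ^ s * c := by
    have h4s : (4 : ℝ) ^ s ≤ x ^ s := Real.rpow_le_rpow (by norm_num) hx hs0
    have h4 : (4 : ℝ) ^ s = (2 : ℝ) ^ s * (2 : ℝ) ^ s := by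
      rw [← Real.mul_rpow (by norm_num) (by norm_num)]
      norm_num
    have h2s : (2 : ℝ) ≤ (2 : ℝ) ^ s := by
      calc (2 : ℝ) = (2 : ℝ) ^ (1 : ℝ) := (Real.rpow_one 2).symm
        _ ≤ (2 : ℝ) ^ s := (Real.rpow_le_rpow_left_iff (by norm_num)).mpr hs.le
    have hcs : c * (2 : ℝ) ^ s = 1 := by
      rw [hc_def, ← Real.rpow_add two_pos]
      simp
    nlinarith [Real.rpow_pos_of_pos two_pos s]
  have hexpand : x ^ s * (1 + c / 2) = x ^ s + (x ^ s * c) / 2 := by ring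
  rw [hhalf]
  linarith [hys2, hbig, hexpand ▸ hys2]

/-- For every real `s > 1` there is an odd positive integer `a` such that
`σ_s(an+2) - σ_s((a+1)n+1)` changes sign infinitely often. -/
theorem stmt_0 (s : ℝ) (hs : 1 < s) :
    ∃ a : ℕ, Odd a ∧ 0 < a ∧
      {n : ℕ | 0 < n ∧ sigmaR s (a * n + 2) < sigmaR s ((a + 1) * n + 1)}.Infinite ∧
      {n : ℕ | 0 < n ∧ sigmaR s ((a + 1) * n + 1) < sigmaR s (a * n + 2)}.Infinite := by
  have hs0 : (0 : ℝ) ≤ s := by linarith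
  have hc : 0 < (2 : ℝ) ^ (-s) := Real.rpow_pos_of_pos two_pos _
  have htend : Filter.Tendsto (fun a : ℕ => ((1 : ℝ) + 1 / a) ^ s)
      Filter.atTop (nhds 1) := by
    have h0 : Filter.Tendsto (fun a : ℕ => (1 : ℝ) + 1 / a) Filter.atTop (nhds 1) := by
      simpa using (tendsto_const_nhds (x := (1:ℝ))).add tendsto_one_div_atTop_nhds_zero_nat
    simpa [Real.one_rpow] using h0.rpow_const (Or.inr hs0)
  have hev : ∀ᶠ a : ℕ in Filter.atTop,
      ((1 : ℝ) + 1 / a) ^ s < 1 + (2 : ℝ) ^ (-s) / 2 :=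
    htend.eventually_lt_const (by linarith)
  obtain ⟨N, hN⟩ := Filter.eventually_atTop.mp hev
  refine ⟨2 * N + 3, ⟨N + 1, by ring⟩, by omega, ?_, ?_⟩
  · -- a := 2*N+3; primes p ≡ 2 (mod a) give σ(an+2) < σ((a+1)n+1)
    set a : ℕ := 2 * N + 3 with ha_def
    have ha_odd : Odd a := ⟨N + 1, by omega⟩
    have : NeZero a := ⟨by omega⟩
    have hunit : IsUnit ((2 : ℕ) : ZMod a) := by
      rw [ZMod.isUnit_iff_coprime]
      simpa using ha_odd.coprime_two_left
    apply Set.infinite_of_forall_exists_gt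
    intro M
    obtain ⟨p, hpgt, hp, hpmod⟩ :=
      Nat.forall_exists_prime_gt_and_eq_mod hunit (a * (M + 3) + 2)
    have hmod : p % a = 2 := by
      have h := (ZMod.natCast_eq_natCast_iff p 2 a).mp (by exact_mod_cast hpmod)
      have h2 : 2 % a = 2 := Nat.mod_eq_of_lt (by omega)
      unfold Nat.ModEq at h
      omega
    obtain ⟨n, hpn⟩ : ∃ n, a * n + 2 = p :=
      ⟨p / a, by have := Nat.div_add_mod p a; omega⟩
    have hnM3 : M + 3 < n := by
      apply Nat.lt_of_mul_lt_mul_left (a := a)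
      omega
    refine ⟨n, ⟨by omega, ?_⟩, by omega⟩
    rw [hpn, sigmaR_prime s hp]
    have hy : ((((a + 1) * n + 1 : ℕ) : ℝ)) ^ s ≤ sigmaR s ((a + 1) * n + 1) :=
      sigmaR_ge s hs0 (by positivity)
    refine lt_of_lt_of_le (ineqA hs ?_ ?_) hy
    · exact_mod_cast hp.two_le
    · rw [← hpn]
      push_cast
      have h3 : (3 : ℝ) ≤ (n : ℝ) := by exact_mod_cast (by omega : 3 ≤ n)
      nlinarith
  · -- primes p ≡ 1 (mod 2(a+1)) give σ((a+1)n+1) < σ(an+2)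
    set a : ℕ := 2 * N + 3 with ha_def
    have hka : ((1 : ℝ) + 1 / a) ^ s < 1 + (2 : ℝ) ^ (-s) / 2 := hN a (by omega)
    set q : ℕ := 2 * (a + 1) with hq_def
    have : NeZero q := ⟨by omega⟩
    have hunit : IsUnit ((1 : ℕ) : ZMod q) := by simp
    apply Set.infinite_of_forall_exists_gt
    intro M
    obtain ⟨p, hpgt, hp, hpmod⟩ :=
      Nat.forall_exists_prime_gt_and_eq_mod hunit (q * (M + 3) + 1)
    have hmod : p % q = 1 := by
      have h := (ZMod.natCast_eq_natCast_iff p 1 q).mp (by exact_mod_cast hpmod)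
      have h2 : 1 % q = 1 := Nat.mod_eq_of_lt (by omega)
      unfold Nat.ModEq at h
      omega
    obtain ⟨m, hm2⟩ : ∃ m, q * m + 1 = p :=
      ⟨p / q, by have := Nat.div_add_mod p q; omega⟩
    have hmM : M + 3 < m := by
      apply Nat.lt_of_mul_lt_mul_left (a := q)
      omega
    have hpn : (a + 1) * (2 * m) + 1 = p := by
      rw [← hm2, hq_def]; ring
    refine ⟨2 * m, ⟨by omega, ?_⟩, by omega⟩
    rw [hpn, sigmaR_prime s hp]
    have hxeven : 2 ∣ a * (2 * m) + 2 := ⟨a * m + 1, by ring⟩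
    have h4 : 4 ≤ a * (2 * m) + 2 := by
      have : 2 * 2 ≤ a * (2 * m) := Nat.mul_le_mul (by omega) (by omega)
      omega
    have hlow := sigmaR_ge_even s hxeven (by omega)
    refine lt_of_lt_of_le (ineqB (A := (a : ℝ)) hs ?_ ?_ ?_ ?_ hka) hlow
    · exact_mod_cast h4
    · have : 0 < p := hp.pos
      exact_mod_cast this
    · have : 1 ≤ a := by omega
      exact_mod_cast this
    · rw [← hpn]
      push_cast
      nlinarith [(by exact_mod_cast (by omega : 1 ≤ a) : (1:ℝ) ≤ (a:ℝ)),
        (by exact_mod_cast (by omega : 1 ≤ m) : (1:ℝ) ≤ (m:ℝ))]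
end

section
/- For every real number s > 1 and every odd positive integer a, there are infinitely many positive integers n such that σ_s(an+2) < σ_s((a+1)n+1). -/
open Finset

lemma le_sigmaR (s : ℝ) {m : ℕ} (hm : 2 ≤ m) : 1 + (m : ℝ) ^ s ≤ sigmaR s m := by
  have h0 : m ≠ 0 := by omega
  have hsub : ({1, m} : Finset ℕ) ⊆ m.divisors := by
    intro d hd
    simp only [Finset.mem_insert, Finset.mem_singleton] at hd
    rcases hd with rfl | rfl
    · exact Nat.one_mem_divisors.mpr h0
    · exact Nat.mem_divisors_self _ h0
  have := Finset.sum_le_sum_of_subset_of_nonneg hsub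
    (fun d _ _ => Real.rpow_nonneg (Nat.cast_nonneg d) s)
  rw [Finset.sum_pair (by omega : (1 : ℕ) ≠ m)] at this
  simpa [Real.one_rpow, sigmaR] using this

/-- For every real `s > 1` and every odd positive integer `a`, there are infinitely many
positive integers `n` with `σ_s(an+2) < σ_s((a+1)n+1)`. -/
theorem stmt_1 (s : ℝ) (hs : 1 < s) (a : ℕ) (ha : Odd a) (ha0 : 0 < a) :
    {n : ℕ | 0 < n ∧ sigmaR s (a * n + 2) < sigmaR s ((a + 1) * n + 1)}.Infinite := by
  have : NeZero a := ⟨ha0.ne'⟩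
  have hcop : Nat.Coprime 2 a := Nat.coprime_two_left.mpr ha
  have hunit : IsUnit ((2 : ℕ) : ZMod a) := (ZMod.isUnit_iff_coprime 2 a).mpr hcop
  apply Set.infinite_of_forall_exists_gt
  intro N
  obtain ⟨p, hpgt, hp, hpmod⟩ :=
    Nat.forall_exists_prime_gt_and_eq_mod hunit (a * N + 2 * a + 2)
  have hmod : p ≡ 2 [MOD a] := (ZMod.natCast_eq_natCast_iff _ _ _).mp hpmod
  have hp2 : 2 ≤ p := hp.two_le
  have hdvd : a ∣ p - 2 := (Nat.modEq_iff_dvd' hp2).mp hmod.symm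
  set n := (p - 2) / a with hn
  have han : a * n = p - 2 := Nat.mul_div_cancel' hdvd
  have hpn : a * n + 2 = p := by omega
  have hNn : N < n := by
    by_contra h
    push_neg at h
    have : a * n ≤ a * N := Nat.mul_le_mul_left a h
    omega
  have hn2 : 2 ≤ n := by
    by_contra h
    push_neg at h
    interval_cases n <;> omega
  refine ⟨n, ⟨by omega, ?_⟩, hNn⟩
  rw [hpn, sigmaR_prime s hp]
  have hm2 : 2 ≤ (a + 1) * n + 1 := by nlinarith
  have hlt : p < (a + 1) * n + 1 := by
    rw [← hpn]; nlinarith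
  calc 1 + (p : ℝ) ^ s < 1 + ((a + 1) * n + 1 : ℕ) ^ s := by
        have : (p : ℝ) < ((a + 1) * n + 1 : ℕ) := by exact_mod_cast hlt
        have := Real.rpow_lt_rpow (by positivity) this (by linarith)
        linarith
    _ ≤ sigmaR s ((a + 1) * n + 1) := le_sigmaR s hm2
end

section
/- There exists a positive integer K₀ such that for every integer K ≥ K₀, ∑_{n=1}^{K} σ(30n) > ∑_{n=1}^{K} σ(30n+1). -/
set_option maxHeartbeats 1000000
open Finset
def sigma1 (n : ℕ) : ℕ := ∑ d ∈ n.divisors, d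

lemma tail_sq (a : ℕ) (ha : 1 ≤ a) : ∀ M : ℕ, a ≤ M →
    ∑ d ∈ Icc (a + 1) M, (1 : ℚ) / (d : ℚ) ^ 2 ≤ 1 / a - 1 / M := by
  intro M
  induction M with
  | zero => intro h; omega
  | succ M ih =>
    intro hM
    rcases Nat.lt_or_ge a (M + 1) with h | h
    · have haM : a ≤ M := by omega
      have hstep : ∑ d ∈ Icc (a + 1) (M + 1), (1 : ℚ) / (d : ℚ) ^ 2
          = (∑ d ∈ Icc (a + 1) M, (1 : ℚ) / (d : ℚ) ^ 2) + 1 / ((M + 1 : ℕ) : ℚ) ^ 2 := by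
        rw [← Finset.sum_Icc_succ_top (by omega : a + 1 ≤ M + 1)]
      rw [hstep]
      have h1 := ih haM
      have hM1 : (1 : ℚ) ≤ (M : ℚ) := by exact_mod_cast (by omega : 1 ≤ M)
      have key : (1 : ℚ) / ((M + 1 : ℕ) : ℚ) ^ 2 ≤ 1 / (M : ℚ) - 1 / ((M + 1 : ℕ) : ℚ) := by
        push_cast
        rw [div_sub_div _ _ (by linarith) (by linarith), one_mul]
        rw [div_le_div_iff₀ (by positivity) (by positivity)]
        ring_nf
        nlinarith
      push_cast at h1 key ⊢
      linarith
    · have : a = M + 1 := by omega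
      subst this
      simp

lemma coprime_set : (Icc 1 30).filter (fun d => Nat.Coprime d 30)
    = ({1, 7, 11, 13, 17, 19, 23, 29} : Finset ℕ) := by decide

lemma count_le (d K : ℕ) (hd : Nat.Coprime d 30) :
    ((Icc 1 K).filter (fun n => d ∣ 30 * n + 1)).card ≤ K / d + 1 := by
  have hd1 : 1 ≤ d := Nat.pos_of_ne_zero (by rintro rfl; simp [Nat.Coprime] at hd)
  have := Finset.card_le_card_of_injOn (fun n => n / d)
    (s := (Icc 1 K).filter (fun n => d ∣ 30 * n + 1)) (t := Finset.range (K / d + 1))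
    ?_ ?_
  · simpa using this
  · intro n hn
    simp only [mem_coe, mem_filter, mem_Icc] at hn
    simp only [mem_coe, mem_range]
    exact Nat.lt_succ_of_le (Nat.div_le_div_right hn.1.2)
  · intro a ha b hb hab
    simp only [coe_filter, Set.mem_setOf_eq, mem_Icc] at ha hb
    have key : ∀ x y : ℕ, x ≤ y → d ∣ 30 * x + 1 → d ∣ 30 * y + 1 → x % d = y % d := by
      intro x y hxy h1 h2
      have h3 : d ∣ (30 * y + 1) - (30 * x + 1) := Nat.dvd_sub h2 h1
      have h4 : (30 * y + 1) - (30 * x + 1) = (y - x) * 30 := by omega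
      rw [h4] at h3
      have h5 : d ∣ y - x := hd.dvd_of_dvd_mul_right h3
      obtain ⟨t, ht⟩ := h5
      have : y = x + d * t := by omega
      simp [this, Nat.add_mul_mod_self_left]
    have hmod : a % d = b % d := by
      rcases le_total a b with h | h
      · exact key a b h ha.2 hb.2
      · exact (key b a h hb.2 ha.2).symm
    have ha' := Nat.div_add_mod a d
    have hb' := Nat.div_add_mod b d
    have hq : d * (a / d) = d * (b / d) := by simp only at hab; rw [hab]
    omega

lemma sigma_le_sum (m M : ℕ) (hm : 1 ≤ m) (hM : m ≤ M) :
    sigma1 m ≤ ∑ d ∈ Icc 1 M, (if d ∣ m then m / d else 0) := by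
  rw [← Finset.sum_filter]
  have h1 : sigma1 m = ∑ d ∈ m.divisors, m / d := (Nat.sum_div_divisors m id).symm
  rw [h1]
  apply Finset.sum_le_sum_of_subset
  intro d hd
  rw [Nat.mem_divisors] at hd
  simp only [mem_filter, mem_Icc]
  exact ⟨⟨Nat.pos_of_dvd_of_pos hd.1 hm, le_trans (Nat.le_of_dvd hm hd.1) hM⟩, hd.1⟩

lemma inner_le (d K : ℕ) :
    ∑ n ∈ Icc 1 K, (if d ∣ 30 * n + 1 then (30 * n + 1) / d else 0)
      ≤ if Nat.Coprime d 30 then (K / d + 1) * ((30 * K + 1) / d) else 0 := by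
  by_cases hd : Nat.Coprime d 30
  · rw [if_pos hd, ← Finset.sum_filter]
    calc ∑ n ∈ (Icc 1 K).filter (fun n => d ∣ 30 * n + 1), (30 * n + 1) / d
        ≤ ∑ _n ∈ (Icc 1 K).filter (fun n => d ∣ 30 * n + 1), (30 * K + 1) / d := by
          apply Finset.sum_le_sum
          intro n hn
          simp only [mem_filter, mem_Icc] at hn
          exact Nat.div_le_div_right (by omega)
      _ = ((Icc 1 K).filter (fun n => d ∣ 30 * n + 1)).card * ((30 * K + 1) / d) := by
          rw [Finset.sum_const, smul_eq_mul]
      _ ≤ (K / d + 1) * ((30 * K + 1) / d) :=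
          Nat.mul_le_mul_right _ (count_le d K hd)
  · rw [if_neg hd]
    apply Nat.le_of_eq
    apply Finset.sum_eq_zero
    intro n _
    rw [if_neg]
    intro hdvd
    apply hd
    have h1 : Nat.gcd d 30 ∣ 30 * n + 1 := (Nat.gcd_dvd_left d 30).trans hdvd
    have h2 : Nat.gcd d 30 ∣ 30 * n := Dvd.dvd.mul_right (Nat.gcd_dvd_right d 30) n
    have h3 : Nat.gcd d 30 ∣ 1 := by
      have := Nat.dvd_sub h1 h2
      simpa using this
    exact Nat.dvd_one.mp h3

lemma lower_term (n : ℕ) (hn : 1 ≤ n) : 72 * n ≤ sigma1 (30 * n) := by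
  have hsub : (({1,2,3,5,6,10,15,30} : Finset ℕ).image (· * n)) ⊆ (30 * n).divisors := by
    intro x hx
    simp only [mem_image] at hx
    obtain ⟨c, hc, rfl⟩ := hx
    rw [Nat.mem_divisors]
    refine ⟨mul_dvd_mul ?_ dvd_rfl, by positivity⟩
    fin_cases hc <;> norm_num
  have hinj : ∀ a ∈ ({1,2,3,5,6,10,15,30} : Finset ℕ), ∀ b ∈ ({1,2,3,5,6,10,15,30} : Finset ℕ),
      a * n = b * n → a = b := fun a _ b _ h => Nat.eq_of_mul_eq_mul_right hn h
  calc 72 * n = ∑ c ∈ ({1,2,3,5,6,10,15,30} : Finset ℕ), c * n := by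
        rw [← Finset.sum_mul]; norm_num
    _ = ∑ x ∈ (({1,2,3,5,6,10,15,30} : Finset ℕ).image (· * n)), x :=
        by rw [Finset.sum_image hinj]
    _ ≤ sigma1 (30 * n) := Finset.sum_le_sum_of_subset hsub

lemma sq_sum_le (M : ℕ) (hM : 30 ≤ M) :
    ∑ d ∈ (Icc 1 M).filter (fun d => Nat.Coprime d 30), (1 : ℚ) / (d : ℚ) ^ 2 ≤ 27 / 25 := by
  have hsplit : (Icc 1 M).filter (fun d => Nat.Coprime d 30)
      ⊆ ((Icc 1 30).filter (fun d => Nat.Coprime d 30)) ∪ Icc 31 M := by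
    intro d hd
    simp only [mem_filter, mem_Icc, mem_union] at hd ⊢
    omega
  calc ∑ d ∈ (Icc 1 M).filter (fun d => Nat.Coprime d 30), (1 : ℚ) / (d : ℚ) ^ 2
      ≤ ∑ d ∈ ((Icc 1 30).filter (fun d => Nat.Coprime d 30)) ∪ Icc 31 M,
          (1 : ℚ) / (d : ℚ) ^ 2 := by
        apply Finset.sum_le_sum_of_subset_of_nonneg hsplit
        intro d _ _
        positivity
    _ = (∑ d ∈ (Icc 1 30).filter (fun d => Nat.Coprime d 30), (1 : ℚ) / (d : ℚ) ^ 2)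
        + ∑ d ∈ Icc 31 M, (1 : ℚ) / (d : ℚ) ^ 2 := by
        apply Finset.sum_union
        rw [Finset.disjoint_left]
        intro d hd1 hd2
        simp only [mem_filter, mem_Icc] at hd1 hd2
        omega
    _ ≤ 27 / 25 := by
        have h1 : ∑ d ∈ (Icc 1 30).filter (fun d => Nat.Coprime d 30), (1 : ℚ) / (d : ℚ) ^ 2
            ≤ 522 / 500 := by
          rw [coprime_set]
          norm_num
        have h2 : ∑ d ∈ Icc 31 M, (1 : ℚ) / (d : ℚ) ^ 2 ≤ 1 / 30 := by
          have h2' := tail_sq 30 (by norm_num) M hM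
          have hM0 : (0 : ℚ) ≤ (M : ℚ)⁻¹ := by positivity
          push_cast at h2'
          norm_num at h2' ⊢
          linarith
        linarith

lemma harmonic_le (M : ℕ) (hM : 1 ≤ M) :
    ∑ d ∈ Icc 1 M, (1 : ℚ) / (d : ℚ) ≤ 2 * (Nat.sqrt M : ℚ) + 1 := by
  set s := Nat.sqrt M with hs
  have hs1 : 1 ≤ s := Nat.one_le_iff_ne_zero.mpr (by
    intro h0
    have := Nat.sqrt_eq_zero.mp h0
    omega)
  have hsM : s ≤ M := Nat.sqrt_le_self M
  have hsplit : (∑ d ∈ Ioc 0 s, (1 : ℚ) / (d : ℚ)) + ∑ d ∈ Ioc s M, (1 : ℚ) / (d : ℚ)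
      = ∑ d ∈ Ioc 0 M, (1 : ℚ) / (d : ℚ) :=
    Finset.sum_Ioc_consecutive _ (by omega) hsM
  have hIcc : Icc 1 M = Ioc 0 M := by rw [← Finset.Icc_add_one_left_eq_Ioc]; rfl
  rw [hIcc, ← hsplit]
  have h1 : ∑ d ∈ Ioc 0 s, (1 : ℚ) / (d : ℚ) ≤ (s : ℚ) := by
    calc ∑ d ∈ Ioc 0 s, (1 : ℚ) / (d : ℚ) ≤ ∑ _d ∈ Ioc 0 s, (1 : ℚ) := by
          apply Finset.sum_le_sum
          intro d hd
          rw [mem_Ioc] at hd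
          rw [div_le_one (by exact_mod_cast hd.1)]
          exact_mod_cast hd.1
      _ = (s : ℚ) := by simp [Nat.card_Ioc]
  have h2 : ∑ d ∈ Ioc s M, (1 : ℚ) / (d : ℚ) ≤ (s : ℚ) + 1 := by
    have hMs : M < (s + 1) * (s + 1) := Nat.lt_succ_sqrt M
    calc ∑ d ∈ Ioc s M, (1 : ℚ) / (d : ℚ) ≤ ∑ _d ∈ Ioc s M, (1 : ℚ) / ((s : ℚ) + 1) := by
          apply Finset.sum_le_sum
          intro d hd
          rw [mem_Ioc] at hd
          apply one_div_le_one_div_of_le (by positivity)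
          exact_mod_cast hd.1
      _ = ((M - s : ℕ) : ℚ) / ((s : ℚ) + 1) := by
          rw [Finset.sum_const, Nat.card_Ioc]; push_cast; ring
      _ ≤ (s : ℚ) + 1 := by
          rw [div_le_iff₀ (by positivity)]
          have : ((M - s : ℕ) : ℚ) ≤ (M : ℚ) := by
            exact_mod_cast Nat.sub_le M s
          have hM' : (M : ℚ) ≤ ((s : ℚ) + 1) * ((s : ℚ) + 1) - 1 := by
            have : (M : ℚ) < ((s : ℚ) + 1) * ((s : ℚ) + 1) := by exact_mod_cast hMs
            have hint : (M : ℚ) + 1 ≤ ((s : ℚ) + 1) * ((s : ℚ) + 1) := by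
              exact_mod_cast hMs
            linarith
          nlinarith [Nat.cast_nonneg (α := ℚ) s]
  linarith

lemma gauss_q (K : ℕ) : ∑ n ∈ Icc 1 K, (n : ℚ) = K * (K + 1) / 2 := by
  induction K with
  | zero => simp
  | succ K ih =>
    rw [Finset.sum_Icc_succ_top (by omega : 1 ≤ K + 1), ih]
    push_cast
    ring

/-- For all sufficiently large `K`, `∑_{n ≤ K} σ(30n) > ∑_{n ≤ K} σ(30n+1)`. -/
theorem stmt_4 :
    ∃ K₀ : ℕ, 0 < K₀ ∧ ∀ K : ℕ, K₀ ≤ K →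
      ∑ n ∈ Finset.Icc 1 K, sigma1 (30 * n + 1) < ∑ n ∈ Finset.Icc 1 K, sigma1 (30 * n) := by
  refine ⟨30000, by norm_num, fun K hK => ?_⟩
  set s := Nat.sqrt (30 * K + 1) with hsdef
  have hK1 : 1 ≤ K := by omega
  have hM30 : 30 ≤ 30 * K + 1 := by omega
  have hs2 : s * s ≤ 30 * K + 1 := by
    have := Nat.sqrt_le' (30 * K + 1)
    rw [pow_two] at this
    exact this
  have h31s : 31 * s ≤ K := by
    by_contra hcon
    push_neg at hcon
    have h1 : (K + 1) * (K + 1) ≤ (31 * s) * (31 * s) :=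
      Nat.mul_le_mul hcon hcon
    nlinarith
  -- Upper bound in ℕ
  have step1 : ∑ n ∈ Icc 1 K, sigma1 (30 * n + 1)
      ≤ ∑ n ∈ Icc 1 K, ∑ d ∈ Icc 1 (30 * K + 1), (if d ∣ 30 * n + 1 then (30 * n + 1) / d else 0) := by
    apply Finset.sum_le_sum
    intro n hn
    rw [mem_Icc] at hn
    exact sigma_le_sum (30 * n + 1) (30 * K + 1) (by omega) (by omega)
  have step2 : ∑ n ∈ Icc 1 K, ∑ d ∈ Icc 1 (30 * K + 1), (if d ∣ 30 * n + 1 then (30 * n + 1) / d else 0)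
      = ∑ d ∈ Icc 1 (30 * K + 1), ∑ n ∈ Icc 1 K, (if d ∣ 30 * n + 1 then (30 * n + 1) / d else 0) :=
    Finset.sum_comm
  have step3 : ∑ d ∈ Icc 1 (30 * K + 1), ∑ n ∈ Icc 1 K, (if d ∣ 30 * n + 1 then (30 * n + 1) / d else 0)
      ≤ ∑ d ∈ Icc 1 (30 * K + 1), (if Nat.Coprime d 30 then (K / d + 1) * ((30 * K + 1) / d) else 0) :=
    Finset.sum_le_sum (fun d _ => inner_le d K)
  have step4 : ∑ d ∈ Icc 1 (30 * K + 1), (if Nat.Coprime d 30 then (K / d + 1) * ((30 * K + 1) / d) else 0)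
      = ∑ d ∈ (Icc 1 (30 * K + 1)).filter (fun d => Nat.Coprime d 30), (K / d + 1) * ((30 * K + 1) / d) :=
    (Finset.sum_filter _ _).symm
  have hUpperNat : ∑ n ∈ Icc 1 K, sigma1 (30 * n + 1)
      ≤ ∑ d ∈ (Icc 1 (30 * K + 1)).filter (fun d => Nat.Coprime d 30), (K / d + 1) * ((30 * K + 1) / d) := by
    omega
  -- pass to ℚ
  have hUpperQ : ((∑ n ∈ Icc 1 K, sigma1 (30 * n + 1) : ℕ) : ℚ)
      ≤ (K : ℚ) * (30 * (K : ℚ) + 1) * (27 / 25) + (30 * (K : ℚ) + 1) * (2 * (s : ℚ) + 1) := by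
    have hcast : ((∑ d ∈ (Icc 1 (30 * K + 1)).filter (fun d => Nat.Coprime d 30),
        (K / d + 1) * ((30 * K + 1) / d) : ℕ) : ℚ)
        ≤ ∑ d ∈ (Icc 1 (30 * K + 1)).filter (fun d => Nat.Coprime d 30),
            ((K : ℚ) * (30 * (K : ℚ) + 1) * (1 / (d : ℚ) ^ 2) + (30 * (K : ℚ) + 1) * (1 / (d : ℚ))) := by
      push_cast
      apply Finset.sum_le_sum
      intro d hd
      simp only [mem_filter, mem_Icc] at hd
      have hd0 : (0 : ℚ) < (d : ℚ) := by exact_mod_cast hd.1.1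
      have e1 : ((K / d : ℕ) : ℚ) ≤ (K : ℚ) / (d : ℚ) := Nat.cast_div_le
      have e2 : (((30 * K + 1) / d : ℕ) : ℚ) ≤ (30 * (K : ℚ) + 1) / (d : ℚ) := by
        have := Nat.cast_div_le (α := ℚ) (m := 30 * K + 1) (n := d)
        push_cast at this
        exact this
      have e3 : ((K : ℚ) / (d : ℚ) + 1) * ((30 * (K : ℚ) + 1) / (d : ℚ))
          = (K : ℚ) * (30 * (K : ℚ) + 1) * (1 / (d : ℚ) ^ 2) + (30 * (K : ℚ) + 1) * (1 / (d : ℚ)) := by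
        field_simp
      have hMd : (0 : ℚ) ≤ (((30 * K + 1) / d : ℕ) : ℚ) := by positivity
      have e2' : (((30 * K + 1) / d : ℕ) : ℚ) = ((30 * (K : ℚ) + 1 * 1) / (d : ℚ)) → True := fun _ => trivial
      calc (((K / d : ℕ) : ℚ) + 1) * (((30 * K + 1) / d : ℕ) : ℚ)
          ≤ ((K : ℚ) / (d : ℚ) + 1) * ((30 * (K : ℚ) + 1) / (d : ℚ)) := by
            apply mul_le_mul (by linarith) ?_ ?_ ?_
            · push_cast
              exact e2
            · push_cast
              exact hMd
            · positivity
        _ = _ := e3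
    have hsum : ∑ d ∈ (Icc 1 (30 * K + 1)).filter (fun d => Nat.Coprime d 30),
          ((K : ℚ) * (30 * (K : ℚ) + 1) * (1 / (d : ℚ) ^ 2) + (30 * (K : ℚ) + 1) * (1 / (d : ℚ)))
        ≤ (K : ℚ) * (30 * (K : ℚ) + 1) * (27 / 25) + (30 * (K : ℚ) + 1) * (2 * (s : ℚ) + 1) := by
      rw [Finset.sum_add_distrib, ← Finset.mul_sum, ← Finset.mul_sum]
      have hA : ∑ d ∈ (Icc 1 (30 * K + 1)).filter (fun d => Nat.Coprime d 30), (1 : ℚ) / (d : ℚ) ^ 2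
          ≤ 27 / 25 := sq_sum_le (30 * K + 1) hM30
      have hB : ∑ d ∈ (Icc 1 (30 * K + 1)).filter (fun d => Nat.Coprime d 30), (1 : ℚ) / (d : ℚ)
          ≤ 2 * (s : ℚ) + 1 := by
        calc ∑ d ∈ (Icc 1 (30 * K + 1)).filter (fun d => Nat.Coprime d 30), (1 : ℚ) / (d : ℚ)
            ≤ ∑ d ∈ Icc 1 (30 * K + 1), (1 : ℚ) / (d : ℚ) := by
              apply Finset.sum_le_sum_of_subset_of_nonneg (Finset.filter_subset _ _)
              intro d _ _
              positivity
          _ ≤ 2 * (s : ℚ) + 1 := harmonic_le (30 * K + 1) (by omega)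
      have hKM : (0 : ℚ) ≤ (K : ℚ) * (30 * (K : ℚ) + 1) := by positivity
      have hM0 : (0 : ℚ) ≤ (30 * (K : ℚ) + 1) := by positivity
      nlinarith
    calc ((∑ n ∈ Icc 1 K, sigma1 (30 * n + 1) : ℕ) : ℚ)
        ≤ ((∑ d ∈ (Icc 1 (30 * K + 1)).filter (fun d => Nat.Coprime d 30),
            (K / d + 1) * ((30 * K + 1) / d) : ℕ) : ℚ) := by exact_mod_cast hUpperNat
      _ ≤ _ := le_trans hcast hsum
  -- lower bound
  have hLowerQ : (36 : ℚ) * K * (K + 1) ≤ ((∑ n ∈ Icc 1 K, sigma1 (30 * n) : ℕ) : ℚ) := by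
    have h1 : ∑ n ∈ Icc 1 K, 72 * n ≤ ∑ n ∈ Icc 1 K, sigma1 (30 * n) := by
      apply Finset.sum_le_sum
      intro n hn
      rw [mem_Icc] at hn
      exact lower_term n hn.1
    have h2 : ((∑ n ∈ Icc 1 K, 72 * n : ℕ) : ℚ) = 36 * K * (K + 1) := by
      push_cast
      rw [← Finset.mul_sum, gauss_q]
      ring
    calc (36 : ℚ) * K * (K + 1) = ((∑ n ∈ Icc 1 K, 72 * n : ℕ) : ℚ) := h2.symm
      _ ≤ _ := by exact_mod_cast h1
  -- numeric finish
  have hnum : (K : ℚ) * (30 * (K : ℚ) + 1) * (27 / 25) + (30 * (K : ℚ) + 1) * (2 * (s : ℚ) + 1)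
      < (36 : ℚ) * K * (K + 1) := by
    have hsq : 31 * (s : ℚ) ≤ (K : ℚ) := by exact_mod_cast h31s
    have hKq : (30000 : ℚ) ≤ (K : ℚ) := by exact_mod_cast hK
    have hs0 : (0 : ℚ) ≤ (s : ℚ) := by positivity
    nlinarith
  have final : ((∑ n ∈ Icc 1 K, sigma1 (30 * n + 1) : ℕ) : ℚ)
      < ((∑ n ∈ Icc 1 K, sigma1 (30 * n) : ℕ) : ℚ) :=
    lt_of_le_of_lt hUpperQ (lt_of_lt_of_le hnum hLowerQ)
  exact_mod_cast final
end

section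
/- As K → ∞, one has ∑_{n=1}^{K} σ(30n) = (319π²/72)·K² + O(K log K); that is, there exist constants C > 0 and K₀ such that for all K ≥ K₀, |∑_{n=1}^{K} σ(30n) − (319π²/72)·K²| ≤ C·K·log K. -/
open Finset Real

lemma sum_filter_dvd {p m : ℕ} (hp : p ≠ 0) (hm : m ≠ 0) :
    ∑ d ∈ (p * m).divisors.filter (p ∣ ·), d = p * sigma1 m := by
  rw [sigma1, Finset.mul_sum]
  apply Finset.sum_nbij' (i := fun d => d / p) (j := fun e => p * e)
  · intro d hd
    simp only [Finset.mem_filter, Nat.mem_divisors] at hd ⊢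
    obtain ⟨⟨hdvd, hne⟩, hpd⟩ := hd
    obtain ⟨e, rfl⟩ := hpd
    rw [Nat.mul_div_cancel_left _ (Nat.pos_of_ne_zero hp)]
    exact ⟨(Nat.mul_dvd_mul_iff_left (Nat.pos_of_ne_zero hp)).mp hdvd, hm⟩
  · intro e he
    simp only [Nat.mem_divisors, Finset.mem_filter] at he ⊢
    exact ⟨⟨Nat.mul_dvd_mul_left p he.1, mul_ne_zero hp hm⟩, Dvd.intro _ rfl⟩
  · intro d hd
    simp only [Finset.mem_filter] at hd
    exact Nat.mul_div_cancel' hd.2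
  · intro e he
    exact Nat.mul_div_cancel_left _ (Nat.pos_of_ne_zero hp)
  · intro d hd
    simp only [Finset.mem_filter] at hd
    exact (Nat.mul_div_cancel' hd.2).symm

lemma filter_not_dvd_eq {p m : ℕ} (hp : p.Prime) (hm : m ≠ 0) :
    (p * m).divisors.filter (fun d => ¬ p ∣ d) = m.divisors.filter (fun d => ¬ p ∣ d) := by
  ext d
  simp only [Finset.mem_filter, Nat.mem_divisors]
  constructor
  · rintro ⟨⟨hdvd, _⟩, hnd⟩
    refine ⟨⟨?_, hm⟩, hnd⟩
    exact Nat.Coprime.dvd_of_dvd_mul_left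
      ((Nat.Prime.coprime_iff_not_dvd hp).mpr hnd).symm hdvd
  · rintro ⟨⟨hdvd, _⟩, hnd⟩
    exact ⟨⟨hdvd.mul_left p, mul_ne_zero hp.ne_zero hm⟩, hnd⟩

lemma sigma1_prime_mul {p m : ℕ} (hp : p.Prime) (hm : m ≠ 0) :
    (sigma1 (p * m) : ℤ) =
      (p + 1) * sigma1 m - (if p ∣ m then (p : ℤ) * sigma1 (m / p) else 0) := by
  have hsplit : ∀ N : ℕ, (sigma1 N : ℤ) =
      (∑ d ∈ N.divisors.filter (p ∣ ·), d : ℕ) +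
      (∑ d ∈ N.divisors.filter (fun d => ¬ p ∣ d), d : ℕ) := by
    intro N
    rw [sigma1, ← Nat.cast_add, Finset.sum_filter_add_sum_filter_not]
  have h1 : (sigma1 (p * m) : ℤ) = (p : ℤ) * sigma1 m +
      (∑ d ∈ m.divisors.filter (fun d => ¬ p ∣ d), d : ℕ) := by
    rw [hsplit (p * m), sum_filter_dvd hp.ne_zero hm, filter_not_dvd_eq hp hm]
    push_cast; ring
  have h2 := hsplit m
  by_cases hpm : p ∣ m
  · rw [if_pos hpm]
    obtain ⟨m', rfl⟩ := hpm
    have hm' : m' ≠ 0 := by rintro rfl; simp at hm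
    have h3 : (∑ d ∈ (p * m').divisors.filter (p ∣ ·), d : ℕ) = p * sigma1 m' :=
      sum_filter_dvd hp.ne_zero hm'
    rw [Nat.mul_div_cancel_left _ hp.pos]
    rw [h3] at h2
    push_cast at h1 h2 ⊢
    linarith
  · rw [if_neg hpm]
    have h3 : m.divisors.filter (p ∣ ·) = ∅ := by
      rw [Finset.filter_eq_empty_iff]
      intro d hd hpd
      exact hpm (hpd.trans (Nat.mem_divisors.mp hd).1)
    rw [h3] at h2
    simp only [Finset.sum_empty, Nat.cast_zero, zero_add] at h2
    push_cast at h1 h2 ⊢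
    linarith

/-- `ee d n = σ(n/d)` if `d ∣ n`, else `0`. -/
def ee (d n : ℕ) : ℤ := if d ∣ n then (sigma1 (n / d) : ℤ) else 0

lemma ee_mul_left {c d n : ℕ} (hc : c ≠ 0) (hcn : c ∣ n) :
    ee d (n / c) = ee (c * d) n := by
  unfold ee
  rw [Nat.div_div_eq_div_mul]
  exact if_congr (Nat.dvd_div_iff_mul_dvd hcn) rfl rfl

lemma ee_of_dvd {d a : ℕ} (hd : d ≠ 0) : ee d (d * a) = (sigma1 a : ℤ) := by
  unfold ee
  rw [if_pos (Dvd.intro _ rfl), Nat.mul_div_cancel_left _ (Nat.pos_of_ne_zero hd)]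

lemma ee_of_not_dvd {d n : ℕ} (h : ¬ d ∣ n) : ee d n = 0 := if_neg h

lemma s5 {m : ℕ} (hm : m ≠ 0) :
    (sigma1 (5 * m) : ℤ) = 6 * sigma1 m - 5 * ee 5 m := by
  rw [sigma1_prime_mul (by norm_num) hm]
  unfold ee
  split_ifs <;> push_cast <;> ring

lemma s15 {m : ℕ} (hm : m ≠ 0) :
    (sigma1 (15 * m) : ℤ) =
      24 * sigma1 m - 18 * ee 3 m - 20 * ee 5 m + 15 * ee 15 m := by
  have h15 : (15 : ℕ) * m = 3 * (5 * m) := by ring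
  have h35 : (3 : ℕ) ∣ 5 * m ↔ 3 ∣ m := by
    constructor
    · intro h
      exact (Nat.Coprime.dvd_of_dvd_mul_left (by norm_num) h)
    · intro h; exact h.mul_left 5
  rw [h15, sigma1_prime_mul (by norm_num) (by positivity)]
  by_cases h3 : 3 ∣ m
  · obtain ⟨a, rfl⟩ := h3
    have ha : a ≠ 0 := by rintro rfl; simp at hm
    rw [if_pos (h35.mpr (Dvd.intro _ rfl))]
    have : 5 * (3 * a) / 3 = 5 * a := by
      rw [show 5 * (3 * a) = 3 * (5 * a) by ring, Nat.mul_div_cancel_left _ (by norm_num)]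
    rw [this, s5 (by positivity), s5 ha]
    have e3 : ee 3 (3 * a) = (sigma1 a : ℤ) := ee_of_dvd (by norm_num)
    have e5 : ee 5 a = ee 15 (3 * a) := by
      have := ee_mul_left (c := 3) (d := 5) (n := 3 * a) (by norm_num) (Dvd.intro _ rfl)
      rw [Nat.mul_div_cancel_left _ (by norm_num)] at this
      rw [this]
    rw [e5] at *
    rw [e3]
    push_cast
    ring
  · rw [if_neg (fun h => h3 (h35.mp h)), s5 hm,
      ee_of_not_dvd (d := 3) h3,
      ee_of_not_dvd (d := 15) (fun h => h3 ((by norm_num : (3:ℕ) ∣ 15).trans h))]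
    ring

lemma s30 {n : ℕ} (hn : n ≠ 0) :
    (sigma1 (30 * n) : ℤ) =
      72 * sigma1 n - 48 * ee 2 n - 54 * ee 3 n - 60 * ee 5 n
        + 36 * ee 6 n + 40 * ee 10 n + 45 * ee 15 n - 30 * ee 30 n := by
  have h30 : (30 : ℕ) * n = 2 * (15 * n) := by ring
  have h215 : (2 : ℕ) ∣ 15 * n ↔ 2 ∣ n := by
    constructor
    · intro h
      exact Nat.Coprime.dvd_of_dvd_mul_left (by norm_num) h
    · intro h; exact h.mul_left 15
  rw [h30, sigma1_prime_mul (by norm_num) (by positivity)]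
  by_cases h2 : 2 ∣ n
  · obtain ⟨a, rfl⟩ := h2
    have ha : a ≠ 0 := by rintro rfl; simp at hn
    rw [if_pos (h215.mpr (Dvd.intro _ rfl))]
    have hq : 15 * (2 * a) / 2 = 15 * a := by
      rw [show 15 * (2 * a) = 2 * (15 * a) by ring, Nat.mul_div_cancel_left _ (by norm_num)]
    rw [hq, s15 (by positivity), s15 ha]
    have e2 : ee 2 (2 * a) = (sigma1 a : ℤ) := ee_of_dvd (by norm_num)
    have sh : ∀ d : ℕ, ee d a = ee (2 * d) (2 * a) := by
      intro d
      have := ee_mul_left (c := 2) (d := d) (n := 2 * a) (by norm_num) (Dvd.intro _ rfl)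
      rw [Nat.mul_div_cancel_left _ (by norm_num)] at this
      exact this
    have e6 := sh 3
    have e10 := sh 5
    have e30 := sh 15
    norm_num at e6 e10 e30
    rw [e6, e10, e30] at *
    rw [e2]
    push_cast
    ring
  · have nd : ∀ d : ℕ, 2 ∣ d → ee d n = 0 := by
      intro d hd
      exact ee_of_not_dvd (fun h => h2 (hd.trans h))
    rw [if_neg (fun h => h2 (h215.mp h)), s15 hn,
      nd 2 (by norm_num), nd 6 (by norm_num), nd 10 (by norm_num), nd 30 (by norm_num)]
    ring

lemma sum_ite_dvd {M : Type*} [AddCommMonoid M] (g : ℕ → M) {d : ℕ} (hd : d ≠ 0) (K : ℕ) :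
    ∑ n ∈ Icc 1 K, (if d ∣ n then g (n / d) else 0) = ∑ m ∈ Icc 1 (K / d), g m := by
  rw [← Finset.sum_filter]
  apply Finset.sum_nbij' (i := fun n => n / d) (j := fun m => d * m)
  · intro n hn
    simp only [Finset.mem_filter, Finset.mem_Icc] at hn ⊢
    obtain ⟨⟨h1, h2⟩, hdvd⟩ := hn
    refine ⟨?_, Nat.div_le_div_right h2⟩
    rw [Nat.one_le_div_iff (Nat.pos_of_ne_zero hd)]
    exact Nat.le_of_dvd (by omega) hdvd
  · intro m hm
    simp only [Finset.mem_Icc, Finset.mem_filter] at hm ⊢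
    refine ⟨⟨?_, ?_⟩, Dvd.intro _ rfl⟩
    · exact Nat.one_le_iff_ne_zero.mpr (Nat.mul_ne_zero hd (by omega))
    · have := (Nat.le_div_iff_mul_le (Nat.pos_of_ne_zero hd)).mp hm.2
      rwa [mul_comm]
  · intro n hn
    simp only [Finset.mem_filter] at hn
    exact Nat.mul_div_cancel' hn.2
  · intro m hm
    exact Nat.mul_div_cancel_left _ (Nat.pos_of_ne_zero hd)
  · intro n hn
    rfl

/-- Partial sums of `σ`. -/
def T (x : ℕ) : ℤ := ∑ m ∈ Icc 1 x, (sigma1 m : ℤ)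

lemma sum_ee (d : ℕ) (hd : d ≠ 0) (K : ℕ) :
    ∑ n ∈ Icc 1 K, ee d n = T (K / d) := by
  exact sum_ite_dvd (fun m => (sigma1 m : ℤ)) hd K

lemma Sexact (K : ℕ) :
    ∑ n ∈ Icc 1 K, (sigma1 (30 * n) : ℤ) =
      72 * T K - 48 * T (K / 2) - 54 * T (K / 3) - 60 * T (K / 5)
        + 36 * T (K / 6) + 40 * T (K / 10) + 45 * T (K / 15) - 30 * T (K / 30) := by
  rw [show ∑ n ∈ Icc 1 K, (sigma1 (30 * n) : ℤ) =
      ∑ n ∈ Icc 1 K, (72 * (sigma1 n : ℤ) - 48 * ee 2 n - 54 * ee 3 n - 60 * ee 5 n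
        + 36 * ee 6 n + 40 * ee 10 n + 45 * ee 15 n - 30 * ee 30 n) from
    Finset.sum_congr rfl fun n hn => s30 (by
      simp only [Finset.mem_Icc] at hn; omega)]
  simp only [Finset.sum_add_distrib, Finset.sum_sub_distrib, ← Finset.mul_sum]
  rw [sum_ee 2 (by norm_num), sum_ee 3 (by norm_num), sum_ee 5 (by norm_num),
    sum_ee 6 (by norm_num), sum_ee 10 (by norm_num), sum_ee 15 (by norm_num),
    sum_ee 30 (by norm_num)]
  rfl

lemma Tswap (K : ℕ) : T K = ∑ d ∈ Icc 1 K, ∑ q ∈ Icc 1 (K / d), (q : ℤ) := by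
  have step : ∀ m ∈ Icc 1 K, (sigma1 m : ℤ) =
      ∑ d ∈ Icc 1 K, (if d ∣ m then ((m / d : ℕ) : ℤ) else 0) := by
    intro m hm
    simp only [Finset.mem_Icc] at hm
    have hsub : m.divisors ⊆ Icc 1 K := by
      intro d hd
      rw [Nat.mem_divisors] at hd
      simp only [Finset.mem_Icc]
      exact ⟨Nat.one_le_iff_ne_zero.mpr (fun h => by subst h; exact hd.2 (zero_dvd_iff.mp hd.1)),
        le_trans (Nat.le_of_dvd (by omega) hd.1) hm.2⟩
    rw [← Finset.sum_subset hsub (fun d _ hd => by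
      rw [if_neg (fun hdvd => hd (Nat.mem_divisors.mpr ⟨hdvd, by omega⟩))])]
    rw [Finset.sum_congr rfl (fun d hd => if_pos (Nat.mem_divisors.mp hd).1)]
    rw [show ∑ d ∈ m.divisors, ((m / d : ℕ) : ℤ) = ∑ d ∈ m.divisors, (d : ℤ) from
      Nat.sum_div_divisors m (fun d => (d : ℤ))]
    rw [sigma1]
    push_cast
    ring
  rw [T, Finset.sum_congr rfl step, Finset.sum_comm]
  exact Finset.sum_congr rfl fun d hd =>
    sum_ite_dvd (fun q => (q : ℤ)) (by simp only [Finset.mem_Icc] at hd; omega) K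

lemma gaussR (x : ℕ) : ∑ q ∈ Icc 1 x, (q : ℝ) = x * (x + 1) / 2 := by
  induction x with
  | zero => simp
  | succ n ih =>
    rw [Finset.sum_Icc_succ_top (by omega), ih]
    push_cast
    ring

lemma basel_partial {K : ℕ} (hK : 1 ≤ K) :
    0 ≤ π ^ 2 / 6 - ∑ d ∈ Icc 1 K, ((d : ℝ) ^ 2)⁻¹ ∧
      π ^ 2 / 6 - ∑ d ∈ Icc 1 K, ((d : ℝ) ^ 2)⁻¹ ≤ 1 / K := by
  set f : ℕ → ℝ := fun n => 1 / (n : ℝ) ^ 2 with hf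
  have hrange : ∑ d ∈ Icc 1 K, ((d : ℝ) ^ 2)⁻¹ = ∑ d ∈ Finset.range (K + 1), f d := by
    have h1 : ∑ d ∈ Icc 1 K, ((d : ℝ) ^ 2)⁻¹ = ∑ d ∈ Icc 1 K, f d :=
      Finset.sum_congr rfl fun d _ => (one_div _).symm
    rw [h1]
    apply Finset.sum_subset
    · intro d hd
      simp only [Finset.mem_Icc] at hd
      exact Finset.mem_range.mpr (by omega)
    · intro d hd hnd
      have : d = 0 := by
        simp only [Finset.mem_range] at hd
        simp only [Finset.mem_Icc] at hnd
        omega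
      simp [this, hf]
  have hz := hasSum_zeta_two
  constructor
  · rw [hrange, sub_nonneg]
    exact sum_le_hasSum _ (fun i _ => by positivity) hz
  · rw [hrange]
    -- tail sum
    have htail : HasSum (fun n => f (n + (K + 1)))
        (π ^ 2 / 6 - ∑ d ∈ Finset.range (K + 1), f d) :=
      (hasSum_nat_add_iff' (K + 1)).mpr hz
    refine hasSum_le_of_sum_le htail ?_
    intro u
    obtain ⟨N, hN⟩ : ∃ N, u ⊆ Finset.range N := ⟨(u.sup id) + 1, fun x hx =>
      Finset.mem_range.mpr (Nat.lt_succ_of_le (Finset.le_sup (f := id) hx))⟩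
    calc ∑ n ∈ u, f (n + (K + 1)) ≤ ∑ n ∈ Finset.range N, f (n + (K + 1)) :=
          Finset.sum_le_sum_of_subset_of_nonneg hN (fun i _ _ => by positivity)
      _ = ∑ i ∈ Finset.Ico (K + 1) (K + 1 + N), f i := by
          rw [Finset.sum_Ico_eq_sum_range]
          simp only [Nat.add_sub_cancel_left]
          exact Finset.sum_congr rfl fun i _ => by rw [add_comm]
      _ = ∑ i ∈ Finset.Ioc K (K + N), ((i : ℝ) ^ 2)⁻¹ := by
          rw [show Finset.Ico (K + 1) (K + 1 + N) = Finset.Ioc K (K + N) by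
            ext x; simp [Finset.mem_Ico, Finset.mem_Ioc]; omega]
          exact Finset.sum_congr rfl fun i _ => one_div _
      _ ≤ (K : ℝ)⁻¹ - ((K + N : ℕ) : ℝ)⁻¹ :=
          sum_Ioc_inv_sq_le_sub (by omega) (by omega)
      _ ≤ 1 / K := by
          rw [one_div]
          have : (0:ℝ) ≤ ((K + N : ℕ) : ℝ)⁻¹ := by positivity
          linarith

lemma floor_div_bounds {K d : ℕ} (hd : 1 ≤ d) :
    ((K / d : ℕ) : ℝ) ≤ (K : ℝ) / d ∧ (K : ℝ) / d ≤ ((K / d : ℕ) : ℝ) + 1 := by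
  have hd0 : (0 : ℝ) < d := by exact_mod_cast hd
  constructor
  · exact Nat.cast_div_le
  · rw [div_le_iff₀ hd0]
    have h1 : K < (K / d + 1) * d := by
      have h2 := Nat.div_add_mod K d
      have h3 := Nat.mod_lt K (show 0 < d by omega)
      calc K = d * (K / d) + K % d := h2.symm
        _ < d * (K / d) + d := by omega
        _ = (K / d + 1) * d := by ring
    calc (K : ℝ) ≤ ((K / d + 1) * d : ℕ) := by exact_mod_cast h1.le
      _ = (((K / d : ℕ) : ℝ) + 1) * d := by push_cast; ring

lemma Tasym {K : ℕ} (hK : 1 ≤ K) :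
    |(T K : ℝ) - π ^ 2 / 12 * (K : ℝ) ^ 2| ≤ 2 * K * (1 + Real.log K) := by
  have hK0 : (0 : ℝ) < K := by exact_mod_cast hK
  have hTr : (T K : ℝ) = ∑ d ∈ Icc 1 K, (((K / d : ℕ) : ℝ) * (((K / d : ℕ) : ℝ) + 1) / 2) := by
    rw [Tswap]
    push_cast
    exact Finset.sum_congr rfl fun d _ => by rw [gaussR]
  set P : ℝ := ∑ d ∈ Icc 1 K, ((d : ℝ) ^ 2)⁻¹ with hP
  have hsplit : (T K : ℝ) - π ^ 2 / 12 * (K : ℝ) ^ 2 =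
      (∑ d ∈ Icc 1 K, (((K / d : ℕ) : ℝ) * (((K / d : ℕ) : ℝ) + 1) / 2
          - (K : ℝ) ^ 2 / 2 * ((d : ℝ) ^ 2)⁻¹))
        + (K : ℝ) ^ 2 / 2 * (P - π ^ 2 / 6) := by
    rw [hTr, Finset.sum_sub_distrib, ← Finset.mul_sum, ← hP]
    ring
  have hterm : ∀ d ∈ Icc 1 K,
      |((K / d : ℕ) : ℝ) * (((K / d : ℕ) : ℝ) + 1) / 2 - (K : ℝ) ^ 2 / 2 * ((d : ℝ) ^ 2)⁻¹|
        ≤ (K : ℝ) * (d : ℝ)⁻¹ := by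
    intro d hd
    simp only [Finset.mem_Icc] at hd
    obtain ⟨hfl1, hfl2⟩ := floor_div_bounds (K := K) hd.1
    have hd0 : (0 : ℝ) < d := by exact_mod_cast hd.1
    set f : ℝ := ((K / d : ℕ) : ℝ) with hfdef
    have hf0 : 0 ≤ f := by positivity
    set r : ℝ := (K : ℝ) / d with hrdef
    have hr1 : 1 ≤ r := by
      rw [hrdef, le_div_iff₀ hd0]
      simpa using (by exact_mod_cast hd.2 : (d : ℝ) ≤ K)
    have hsq : (K : ℝ) ^ 2 / 2 * ((d : ℝ) ^ 2)⁻¹ = r ^ 2 / 2 := by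
      rw [hrdef, div_pow]; ring
    have hKd : (K : ℝ) * (d : ℝ)⁻¹ = r := by rw [hrdef]; ring
    rw [hsq, hKd, abs_le]
    constructor
    · nlinarith [hfl1, hfl2, hr1, hf0]
    · nlinarith [hfl1, hfl2, hr1, hf0]
  have hsum1 : |∑ d ∈ Icc 1 K, (((K / d : ℕ) : ℝ) * (((K / d : ℕ) : ℝ) + 1) / 2
      - (K : ℝ) ^ 2 / 2 * ((d : ℝ) ^ 2)⁻¹)| ≤ (K : ℝ) * (1 + Real.log K) := by
    calc _ ≤ ∑ d ∈ Icc 1 K,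
          |((K / d : ℕ) : ℝ) * (((K / d : ℕ) : ℝ) + 1) / 2 - (K : ℝ) ^ 2 / 2 * ((d : ℝ) ^ 2)⁻¹| :=
        Finset.abs_sum_le_sum_abs _ _
      _ ≤ ∑ d ∈ Icc 1 K, (K : ℝ) * (d : ℝ)⁻¹ := Finset.sum_le_sum hterm
      _ = (K : ℝ) * ∑ d ∈ Icc 1 K, (d : ℝ)⁻¹ := by rw [Finset.mul_sum]
      _ ≤ (K : ℝ) * (1 + Real.log K) := by
        apply mul_le_mul_of_nonneg_left _ (le_of_lt hK0)
        have h := harmonic_le_one_add_log K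
        rw [harmonic_eq_sum_Icc] at h
        push_cast at h
        exact h
  have hbasel := basel_partial hK
  have hsum2 : |(K : ℝ) ^ 2 / 2 * (P - π ^ 2 / 6)| ≤ (K : ℝ) / 2 := by
    rw [abs_mul, abs_of_nonneg (by positivity : (0:ℝ) ≤ (K : ℝ) ^ 2 / 2)]
    have h1 : |P - π ^ 2 / 6| ≤ 1 / (K : ℝ) := by
      rw [abs_le]
      constructor <;> [linarith [hbasel.2]; linarith [hbasel.1]]
    calc (K : ℝ) ^ 2 / 2 * |P - π ^ 2 / 6| ≤ (K : ℝ) ^ 2 / 2 * (1 / K) :=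
        mul_le_mul_of_nonneg_left h1 (by positivity)
      _ = (K : ℝ) / 2 := by field_simp
  have hlog : 0 ≤ Real.log K := Real.log_nonneg (by exact_mod_cast hK)
  calc |(T K : ℝ) - π ^ 2 / 12 * (K : ℝ) ^ 2|
      ≤ (K : ℝ) * (1 + Real.log K) + (K : ℝ) / 2 := by
        rw [hsplit]
        exact (abs_add_le _ _).trans (add_le_add hsum1 hsum2)
    _ ≤ 2 * K * (1 + Real.log K) := by nlinarith

lemma pi_sq_div12_le_one : π ^ 2 / 12 ≤ 1 := by
  nlinarith [Real.pi_lt_d2, Real.pi_gt_three]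

lemma Tasym2 {K d : ℕ} (hd : 1 ≤ d) (hdK : d ≤ K) :
    |(T (K / d) : ℝ) - π ^ 2 / 12 * ((K : ℝ) / d) ^ 2| ≤ 4 * K * (1 + Real.log K) := by
  have hK1 : 1 ≤ K := le_trans hd hdK
  have hK0 : (0 : ℝ) < K := by exact_mod_cast hK1
  have hd0 : (0 : ℝ) < d := by exact_mod_cast hd
  have hK' : 1 ≤ K / d := (Nat.one_le_div_iff (by omega)).mpr hdK
  have h1 := Tasym hK'
  have hKK : (K / d : ℕ) ≤ K := Nat.div_le_self K d
  have hKKr : ((K / d : ℕ) : ℝ) ≤ (K : ℝ) := by exact_mod_cast hKK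
  have hK'0 : (0 : ℝ) < ((K / d : ℕ) : ℝ) := by exact_mod_cast hK'
  have hlog : Real.log ((K / d : ℕ) : ℝ) ≤ Real.log K := Real.log_le_log hK'0 hKKr
  have hlog0 : 0 ≤ Real.log ((K / d : ℕ) : ℝ) := Real.log_nonneg (by exact_mod_cast hK')
  have h1' : |(T (K / d) : ℝ) - π ^ 2 / 12 * ((K / d : ℕ) : ℝ) ^ 2|
      ≤ 2 * K * (1 + Real.log K) := by
    refine h1.trans ?_
    have : (0:ℝ) ≤ 1 + Real.log ((K / d : ℕ) : ℝ) := by linarith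
    nlinarith
  obtain ⟨hfl1, hfl2⟩ := floor_div_bounds (K := K) hd
  have hr1 : (1 : ℝ) ≤ (K : ℝ) / d := by
    rw [le_div_iff₀ hd0]
    simpa using (by exact_mod_cast hdK : (d : ℝ) ≤ K)
  have hrK : (K : ℝ) / d ≤ K := by
    rw [div_le_iff₀ hd0]
    have hd1 : (1:ℝ) ≤ d := by exact_mod_cast hd
    nlinarith
  have h2 : |π ^ 2 / 12 * ((K / d : ℕ) : ℝ) ^ 2 - π ^ 2 / 12 * ((K : ℝ) / d) ^ 2|
      ≤ 2 * (K : ℝ) := by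
    rw [← mul_sub, abs_mul, abs_of_nonneg (by positivity : (0:ℝ) ≤ π ^ 2 / 12)]
    have habs : |((K / d : ℕ) : ℝ) ^ 2 - ((K : ℝ) / d) ^ 2| ≤ 2 * (K : ℝ) := by
      rw [abs_le]
      constructor <;> nlinarith
    calc π ^ 2 / 12 * |((K / d : ℕ) : ℝ) ^ 2 - ((K : ℝ) / d) ^ 2| ≤ 1 * (2 * (K : ℝ)) :=
        mul_le_mul pi_sq_div12_le_one habs (abs_nonneg _) (by norm_num)
      _ = 2 * (K : ℝ) := by ring
  have hlogK0 : 0 ≤ Real.log K := Real.log_nonneg (by exact_mod_cast hK1)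
  calc |(T (K / d) : ℝ) - π ^ 2 / 12 * ((K : ℝ) / d) ^ 2|
      ≤ |(T (K / d) : ℝ) - π ^ 2 / 12 * ((K / d : ℕ) : ℝ) ^ 2|
        + |π ^ 2 / 12 * ((K / d : ℕ) : ℝ) ^ 2 - π ^ 2 / 12 * ((K : ℝ) / d) ^ 2| := by
        exact abs_sub_le _ _ _
    _ ≤ 2 * K * (1 + Real.log K) + 2 * K := add_le_add h1' h2
    _ ≤ 4 * K * (1 + Real.log K) := by nlinarith

/-- `∑_{n ≤ K} σ(30n) = (319π²/72) K² + O(K log K)`. -/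
theorem stmt_5 :
    ∃ C : ℝ, 0 < C ∧ ∃ K₀ : ℕ, ∀ K : ℕ, K₀ ≤ K →
      |(∑ n ∈ Finset.Icc 1 K, sigma1 (30 * n) : ℝ) - (319 * π ^ 2 / 72) * (K : ℝ) ^ 2| ≤
        C * (K : ℝ) * Real.log K := by
  refine ⟨3080, by norm_num, 30, fun K hK => ?_⟩
  have hK1 : (1 : ℕ) ≤ K := by omega
  have hK0 : (0 : ℝ) < K := by exact_mod_cast hK1
  have hzr : (∑ n ∈ Finset.Icc 1 K, sigma1 (30 * n) : ℝ) =
      72 * ((T K : ℤ) : ℝ) - 48 * ((T (K / 2) : ℤ) : ℝ) - 54 * ((T (K / 3) : ℤ) : ℝ)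
        - 60 * ((T (K / 5) : ℤ) : ℝ) + 36 * ((T (K / 6) : ℤ) : ℝ)
        + 40 * ((T (K / 10) : ℤ) : ℝ) + 45 * ((T (K / 15) : ℤ) : ℝ)
        - 30 * ((T (K / 30) : ℤ) : ℝ) := by
    exact_mod_cast congrArg (fun z : ℤ => (z : ℝ)) (Sexact K)
  have B1 := Tasym2 (K := K) (d := 1) (by norm_num) (by omega)
  have B2 := Tasym2 (K := K) (d := 2) (by norm_num) (by omega)
  have B3 := Tasym2 (K := K) (d := 3) (by norm_num) (by omega)
  have B5 := Tasym2 (K := K) (d := 5) (by norm_num) (by omega)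
  have B6 := Tasym2 (K := K) (d := 6) (by norm_num) (by omega)
  have B10 := Tasym2 (K := K) (d := 10) (by norm_num) (by omega)
  have B15 := Tasym2 (K := K) (d := 15) (by norm_num) (by omega)
  have B30 := Tasym2 (K := K) (d := 30) (by norm_num) (by omega)
  simp only [Nat.cast_one, Nat.div_one, div_one] at B1
  have key : (∑ n ∈ Finset.Icc 1 K, sigma1 (30 * n) : ℝ) - (319 * π ^ 2 / 72) * (K : ℝ) ^ 2 =
      72 * (((T K : ℤ) : ℝ) - π ^ 2 / 12 * (K : ℝ) ^ 2)
        - 48 * (((T (K / 2) : ℤ) : ℝ) - π ^ 2 / 12 * ((K : ℝ) / 2) ^ 2)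
        - 54 * (((T (K / 3) : ℤ) : ℝ) - π ^ 2 / 12 * ((K : ℝ) / 3) ^ 2)
        - 60 * (((T (K / 5) : ℤ) : ℝ) - π ^ 2 / 12 * ((K : ℝ) / 5) ^ 2)
        + 36 * (((T (K / 6) : ℤ) : ℝ) - π ^ 2 / 12 * ((K : ℝ) / 6) ^ 2)
        + 40 * (((T (K / 10) : ℤ) : ℝ) - π ^ 2 / 12 * ((K : ℝ) / 10) ^ 2)
        + 45 * (((T (K / 15) : ℤ) : ℝ) - π ^ 2 / 12 * ((K : ℝ) / 15) ^ 2)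
        - 30 * (((T (K / 30) : ℤ) : ℝ) - π ^ 2 / 12 * ((K : ℝ) / 30) ^ 2) := by
    rw [hzr]
    ring
  rw [key]
  have hlog1 : 1 ≤ Real.log K := by
    rw [Real.le_log_iff_exp_le hK0]
    calc Real.exp 1 ≤ 2.7182818286 := Real.exp_one_lt_d9.le
      _ ≤ 30 := by norm_num
      _ ≤ (K : ℝ) := by exact_mod_cast hK
  have hfinal : 1540 * (K : ℝ) * (1 + Real.log K) ≤ 3080 * (K : ℝ) * Real.log K := by
    nlinarith
  obtain ⟨b1, b1'⟩ := abs_le.mp B1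
  obtain ⟨b2, b2'⟩ := abs_le.mp B2
  obtain ⟨b3, b3'⟩ := abs_le.mp B3
  obtain ⟨b5, b5'⟩ := abs_le.mp B5
  obtain ⟨b6, b6'⟩ := abs_le.mp B6
  obtain ⟨b10, b10'⟩ := abs_le.mp B10
  obtain ⟨b15, b15'⟩ := abs_le.mp B15
  obtain ⟨b30, b30'⟩ := abs_le.mp B30
  rw [abs_le]
  constructor <;> push_cast at * <;> linarith
end

section
/- There are infinitely many positive integers m for which the inequalities σ(2m+5) > σ(6m+17) and σ(5m+4) > σ(6m+7) hold simultaneously. -/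
open Finset

lemma sigma1_mul_le {A n : ℕ} (hn : 0 < n) (h : A ∣ n) : sigma1 A * (n / A) ≤ sigma1 n := by
  have hA : 0 < A := Nat.pos_of_dvd_of_pos h hn
  have hq : 0 < n / A := Nat.div_pos (Nat.le_of_dvd hn h) hA
  have hinj : Set.InjOn (fun d => d * (n / A)) A.divisors := by
    intro x _ y _ hxy
    exact Nat.eq_of_mul_eq_mul_right hq hxy
  have hsub : (A.divisors.image (fun d => d * (n / A))) ⊆ n.divisors := by
    intro e he
    rw [mem_image] at he
    obtain ⟨d, hd, rfl⟩ := he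
    rw [Nat.mem_divisors] at hd ⊢
    refine ⟨?_, hn.ne'⟩
    have : d * (n / A) ∣ A * (n / A) := mul_dvd_mul_right hd.1 _
    rwa [Nat.mul_div_cancel' h] at this
  have e1 : sigma1 A * (n / A) = ∑ d ∈ A.divisors, d * (n / A) := by
    unfold sigma1; rw [sum_mul]
  have e2 : ∑ e ∈ A.divisors.image (fun d => d * (n / A)), (id e) = ∑ d ∈ A.divisors, id (d * (n / A)) :=
    sum_image (fun x hx y hy => hinj hx hy)
  simp only [id] at e2
  rw [e1, ← e2]
  exact sum_le_sum_of_subset hsub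

-- L2: cast identity
lemma sigma1_cast (n : ℕ) (hn : 0 < n) : (sigma1 n : ℝ) = n * ∑ d ∈ n.divisors, (1 / d : ℝ) := by
  have h1 : sigma1 n = ∑ d ∈ n.divisors, n / d := (Nat.sum_div_divisors n id).symm
  rw [h1, Nat.cast_sum, mul_sum]
  refine sum_congr rfl fun d hd => ?_
  rw [Nat.mem_divisors] at hd
  rw [Nat.cast_div hd.1 (by exact_mod_cast fun h => (Nat.pos_of_mem_divisors (Nat.mem_divisors.2 hd)).ne' (by exact_mod_cast h))]
  · ring


lemma count_residue (T q t₀ : ℕ) (hq : 0 < q) :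
    ((Icc 1 T).filter (fun t => t ≡ t₀ [MOD q])).card ≤ T / q + 1 := by
  classical
  have := Finset.card_le_card_of_injOn (fun t => t / q)
    (s := (Icc 1 T).filter (fun t => t ≡ t₀ [MOD q])) (t := Finset.Iic (T / q)) ?_ ?_
  · simpa using this
  · intro t ht
    rw [mem_coe, mem_filter, mem_Icc] at ht
    exact Finset.mem_Iic.2 (Nat.div_le_div_right ht.1.2)
  · intro x hx y hy hxy
    rw [coe_filter, Set.mem_setOf_eq] at hx hy
    have hmod : x % q = y % q := by
      have hx1 := hx.2; have hy1 := hy.2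
      unfold Nat.ModEq at hx1 hy1; omega
    simp only at hxy
    calc x = q * (x / q) + x % q := (Nat.div_add_mod x q).symm
      _ = q * (y / q) + y % q := by rw [hxy, hmod]
      _ = y := Nat.div_add_mod y q

lemma sum_inv_sq : ∀ T : ℕ, ∑ d ∈ Icc 1 T, (1 / (d:ℝ)^2) ≤ 2 - 1 / (T:ℝ)
  | 0 => by simp
  | 1 => by norm_num
  | (T+2) => by
    have ih := sum_inv_sq (T+1)
    rw [show T + 2 = T + 1 + 1 from rfl, ← Finset.insert_Icc_right_eq_Icc_add_one (by omega : 1 ≤ T + 1 + 1), Finset.sum_insert (by simp)]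
    have key : (1 / ((T:ℝ)+1+1)^2) ≤ 1 / ((T:ℝ)+1) - 1 / ((T:ℝ)+1+1) := by
      rw [div_sub_div _ _ (by positivity) (by positivity), div_le_div_iff₀ (by positivity) (by positivity)]
      nlinarith [sq_nonneg ((T:ℝ)+1)]
    have e : (T:ℝ) + 1 + 1 = (T:ℝ) + 2 := by ring
    push_cast
    push_cast at ih
    rw [e] at key ⊢
    linarith

lemma sum_inv_sq' (T : ℕ) : ∑ d ∈ Icc 1 T, (1 / (d:ℝ)^2) ≤ 2 := by
  have h : (0:ℝ) ≤ 1 / (T:ℝ) := by positivity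
  linarith [sum_inv_sq T]


lemma tail_bound (n T : ℕ) (hn : 0 < n) (hT : 0 < T) :
    ∑ d ∈ n.divisors.filter (fun d => T < d), (1/(d:ℝ)) ≤ (n:ℝ) / (T:ℝ)^2 := by
  classical
  set F := n.divisors.filter (fun d => T < d) with hF
  -- each d in F : d ∣ n, 0 < d
  have hmem : ∀ d ∈ F, d ∣ n ∧ T < d := by
    intro d hd; rw [hF, mem_filter, Nat.mem_divisors] at hd; exact ⟨hd.1.1, hd.2⟩
  -- in ℕ: ∑ over F of n/d ≤ (n/T)*(n/T)
  have h2 : ∑ d ∈ F, n / d ≤ (n / T) * (n / T) := by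
    have hinj : Set.InjOn (fun d => n / d) F := by
      intro x hx y hy hxy
      have hx' := hmem x (by exact_mod_cast hx)
      have hy' := hmem y (by exact_mod_cast hy)
      simp only at hxy
      rw [← Nat.div_div_self hx'.1 hn.ne', hxy, Nat.div_div_self hy'.1 hn.ne']
    have hsub : F.image (fun d => n / d) ⊆ Icc 1 (n / T) := by
      intro e he
      rw [mem_image] at he
      obtain ⟨d, hd, rfl⟩ := he
      obtain ⟨hdvd, hTd⟩ := hmem d hd
      have hdn : d ≤ n := Nat.le_of_dvd hn hdvd
      refine mem_Icc.2 ⟨Nat.one_le_div_iff (by omega) |>.2 hdn, ?_⟩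
      exact Nat.div_le_div_left (le_of_lt hTd) hT
    calc ∑ d ∈ F, n / d = ∑ e ∈ F.image (fun d => n / d), e := by
          rw [sum_image (fun x hx y hy => hinj hx hy)]
      _ ≤ ∑ e ∈ Icc 1 (n / T), e := sum_le_sum_of_subset hsub
      _ ≤ ∑ _e ∈ Icc 1 (n / T), (n / T) := sum_le_sum (fun e he => (mem_Icc.1 he).2)
      _ ≤ (n / T) * (n / T) := by rw [sum_const, Nat.card_Icc, smul_eq_mul]; simp
  -- cast to ℝ
  have h1 : ∑ d ∈ F, (1/(d:ℝ)) = (1/(n:ℝ)) * ∑ d ∈ F, ((n / d : ℕ) : ℝ) := by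
    rw [mul_sum]
    refine sum_congr rfl fun d hd => ?_
    obtain ⟨hdvd, hTd⟩ := hmem d hd
    have hd0 : (0:ℝ) < d := by exact_mod_cast Nat.pos_of_dvd_of_pos hdvd hn
    rw [Nat.cast_div hdvd hd0.ne']
    field_simp
  have hX : ((n / T : ℕ) : ℝ) ≤ (n:ℝ) / T := Nat.cast_div_le
  have hn0 : (0:ℝ) < n := by exact_mod_cast hn
  have hT0 : (0:ℝ) < T := by exact_mod_cast hT
  rw [h1]
  have h2' : (∑ d ∈ F, ((n / d : ℕ) : ℝ)) ≤ ((n/T : ℕ) : ℝ) * ((n/T : ℕ) : ℝ) := by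
    exact_mod_cast Nat.cast_le.2 h2
  have : ((n/T : ℕ) : ℝ) * ((n/T : ℕ) : ℝ) ≤ ((n:ℝ)/T) * ((n:ℝ)/T) :=
    mul_le_mul hX hX (by positivity) (by positivity)
  calc (1/(n:ℝ)) * ∑ d ∈ F, ((n / d : ℕ) : ℝ) ≤ (1/(n:ℝ)) * (((n:ℝ)/T) * ((n:ℝ)/T)) := by
        apply mul_le_mul_of_nonneg_left _ (by positivity)
        linarith
    _ = (n:ℝ) / (T:ℝ)^2 := by field_simp

lemma count_dvd (K c T d : ℕ) (hK : 0 < K) (hd1 : 1 ≤ d) (hdT : d ≤ T)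
    (hcop : ∀ t ∈ Icc 1 T, Nat.Coprime (6*K*t + c) K) :
    (((Icc 1 T).filter (fun t => d ∣ 6*K*t + c)).card : ℝ) ≤ 7 * T / d := by
  classical
  set F := (Icc 1 T).filter (fun t => d ∣ 6*K*t + c) with hF
  rcases F.eq_empty_or_nonempty with he | ⟨t₁, ht₁⟩
  · rw [he]; simp; positivity
  · have ht₁' := ht₁
    rw [hF, mem_filter] at ht₁'
    obtain ⟨ht₁I, hdvd₁⟩ := ht₁'
    -- d coprime to K
    have hdK : Nat.Coprime d K :=
      Nat.Coprime.coprime_dvd_left hdvd₁ (hcop t₁ ht₁I)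
    set q := d / Nat.gcd d 6 with hq
    have hg6 : Nat.gcd d 6 ∣ d := Nat.gcd_dvd_left d 6
    have hgpos : 0 < Nat.gcd d 6 := Nat.gcd_pos_of_pos_left 6 hd1
    have hqpos : 0 < q := Nat.div_pos (Nat.le_of_dvd hd1 hg6) hgpos
    -- every t in F is ≡ t₁ mod q
    have hsub : F ⊆ (Icc 1 T).filter (fun t => t ≡ t₁ [MOD q]) := by
      intro t ht
      rw [hF, mem_filter] at ht
      obtain ⟨htI, hdvd⟩ := ht
      rw [mem_filter]
      refine ⟨htI, ?_⟩
      have h1 : 6*K*t + c ≡ 6*K*t₁ + c [MOD d] :=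
        ((Nat.modEq_zero_iff_dvd).2 hdvd).trans ((Nat.modEq_zero_iff_dvd).2 hdvd₁).symm
      have h2 : K * (6*t) ≡ K * (6*t₁) [MOD d] := by
        have := h1.add_right_cancel' c
        convert this using 1 <;> ring
      have h3 : 6 * t ≡ 6 * t₁ [MOD d] :=
        Nat.ModEq.cancel_left_of_coprime hdK h2
      exact h3.cancel_left_div_gcd hd1
    have hcard : F.card ≤ T / q + 1 := by
      calc F.card ≤ _ := Finset.card_le_card hsub
        _ ≤ T / q + 1 := count_residue T q t₁ hqpos
    -- real estimates
    have hd0 : (0:ℝ) < d := by exact_mod_cast hd1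
    have hq0 : (0:ℝ) < q := by exact_mod_cast hqpos
    have hT0 : (0:ℝ) < T := by exact_mod_cast lt_of_lt_of_le hd1 hdT
    have hqd : (d:ℝ) ≤ 6 * q := by
      have : (q:ℝ) * Nat.gcd d 6 = d := by
        exact_mod_cast Nat.div_mul_cancel hg6
      have hg6' : (Nat.gcd d 6 : ℝ) ≤ 6 := by
        exact_mod_cast Nat.le_of_dvd (by norm_num) (Nat.gcd_dvd_right d 6)
      nlinarith
    have h5 : ((T / q : ℕ) : ℝ) ≤ (T:ℝ) / q := Nat.cast_div_le
    have h6 : (T:ℝ) / q ≤ 6 * T / d := by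
      rw [div_le_div_iff₀ hq0 hd0]
      nlinarith
    have h7 : (1:ℝ) ≤ (T:ℝ) / d := by
      rw [le_div_iff₀ hd0]
      exact_mod_cast by simpa using hdT
    calc (F.card : ℝ) ≤ ((T / q : ℕ) : ℝ) + 1 := by exact_mod_cast hcard
      _ ≤ 6 * T / d + T / d := by linarith
      _ = 7 * T / d := by ring


lemma markov_sum (K c T : ℕ) (hK : 0 < K) (hc : 0 < c) (hT : 0 < T)
    (hcop : ∀ t ∈ Icc 1 T, Nat.Coprime (6*K*t + c) K) :
    ∑ t ∈ Icc 1 T, (sigma1 (6*K*t+c) : ℝ) / (6*K*t+c) ≤ 14 * T + 6 * K + c := by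
  classical
  have hn : ∀ t, 0 < 6*K*t + c := fun t => by positivity
  have hT0 : (0:ℝ) < T := by exact_mod_cast hT
  -- step 1: per-t split
  have step1 : ∀ t ∈ Icc 1 T, (sigma1 (6*K*t+c) : ℝ) / (6*K*t+c) ≤
      (∑ d ∈ ((6*K*t+c).divisors.filter (fun d => d ≤ T)), (1/(d:ℝ))) + (6*K*t+c : ℝ)/(T:ℝ)^2 := by
    intro t _
    set n := 6*K*t + c with hn'
    have h0 : (sigma1 n : ℝ) / n = ∑ d ∈ n.divisors, (1/(d:ℝ)) := by
      rw [sigma1_cast n (hn t)]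
      rw [mul_div_cancel_left₀ _ (by exact_mod_cast (hn t).ne' : (n:ℝ) ≠ 0)]
    have hcast : (6*(K:ℝ)*t + c) = ((n:ℕ):ℝ) := by rw [hn']; push_cast; ring
    rw [hcast, h0, ← Finset.sum_filter_add_sum_filter_not n.divisors (fun d => d ≤ T)]
    have htail : ∑ d ∈ n.divisors.filter (fun d => ¬ d ≤ T), (1/(d:ℝ)) ≤ (n:ℝ)/(T:ℝ)^2 := by
      have heq : n.divisors.filter (fun d => ¬ d ≤ T) = n.divisors.filter (fun d => T < d) := by
        apply Finset.filter_congr; intro d _; simp [not_le]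
      rw [heq]; exact tail_bound n T (hn t) hT
    push_cast
    linarith
  -- step 2: swap main sums
  have step2 : ∑ t ∈ Icc 1 T, (∑ d ∈ ((6*K*t+c).divisors.filter (fun d => d ≤ T)), (1/(d:ℝ)))
      ≤ 14 * T := by
    have hswap : ∀ t, (∑ d ∈ ((6*K*t+c).divisors.filter (fun d => d ≤ T)), (1/(d:ℝ)))
        = ∑ d ∈ Icc 1 T, (if d ∣ 6*K*t + c then (1/(d:ℝ)) else 0) := by
      intro t
      rw [← Finset.sum_filter]
      congr 1
      ext d
      simp only [mem_filter, Nat.mem_divisors, mem_Icc]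
      constructor
      · rintro ⟨⟨h1, h2⟩, h3⟩
        exact ⟨⟨Nat.pos_of_dvd_of_pos h1 (hn t), h3⟩, h1⟩
      · rintro ⟨⟨h1, h2⟩, h3⟩
        exact ⟨⟨h3, (hn t).ne'⟩, h2⟩
    calc ∑ t ∈ Icc 1 T, (∑ d ∈ ((6*K*t+c).divisors.filter (fun d => d ≤ T)), (1/(d:ℝ)))
        = ∑ t ∈ Icc 1 T, ∑ d ∈ Icc 1 T, (if d ∣ 6*K*t + c then (1/(d:ℝ)) else 0) := by
          exact Finset.sum_congr rfl fun t _ => hswap t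
      _ = ∑ d ∈ Icc 1 T, ∑ t ∈ Icc 1 T, (if d ∣ 6*K*t + c then (1/(d:ℝ)) else 0) :=
          Finset.sum_comm
      _ ≤ ∑ d ∈ Icc 1 T, 7 * (T:ℝ) / (d:ℝ)^2 := by
          refine Finset.sum_le_sum fun d hd => ?_
          rw [mem_Icc] at hd
          have hd0 : (0:ℝ) < d := by exact_mod_cast hd.1
          rw [← Finset.sum_filter, Finset.sum_const]
          have hcnt := count_dvd K c T d hK hd.1 hd.2 hcop
          rw [nsmul_eq_mul]
          calc (((Icc 1 T).filter (fun t => d ∣ 6*K*t + c)).card : ℝ) * (1/(d:ℝ))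
              ≤ (7 * T / d) * (1/(d:ℝ)) := by
                apply mul_le_mul_of_nonneg_right hcnt (by positivity)
            _ = 7 * (T:ℝ) / (d:ℝ)^2 := by field_simp
      _ = 7 * (T:ℝ) * ∑ d ∈ Icc 1 T, (1/(d:ℝ)^2) := by
          rw [mul_sum]
          exact Finset.sum_congr rfl fun d _ => by ring
      _ ≤ 7 * (T:ℝ) * 2 := by
          apply mul_le_mul_of_nonneg_left (sum_inv_sq' T) (by positivity)
      _ = 14 * T := by ring
  -- step 3: tail total
  have step3 : ∑ t ∈ Icc 1 T, ((6*K*t+c : ℕ) : ℝ)/(T:ℝ)^2 ≤ 6*K + c := by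
    have hb : ∀ t ∈ Icc 1 T, ((6*K*t+c : ℕ) : ℝ)/(T:ℝ)^2 ≤ ((6*K*T+c : ℕ) : ℝ)/(T:ℝ)^2 := by
      intro t ht
      rw [mem_Icc] at ht
      gcongr
      exact ht.2
    calc ∑ t ∈ Icc 1 T, ((6*K*t+c : ℕ) : ℝ)/(T:ℝ)^2
        ≤ ∑ _t ∈ Icc 1 T, ((6*K*T+c : ℕ) : ℝ)/(T:ℝ)^2 := Finset.sum_le_sum hb
      _ = T * (((6*K*T+c : ℕ) : ℝ)/(T:ℝ)^2) := by
          rw [Finset.sum_const, Nat.card_Icc, nsmul_eq_mul]; push_cast; ring_nf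
      _ ≤ 6*K + c := by
          push_cast
          have h1 : (1:ℝ) ≤ T := by exact_mod_cast hT
          have hTne : (T:ℝ) ≠ 0 := by positivity
          have he : (T:ℝ) * ((6*(K:ℝ)*T+c)/(T:ℝ)^2) = 6*K + c/T := by field_simp
          rw [he]
          have h2 : (c:ℝ)/T ≤ c := div_le_self (Nat.cast_nonneg c) h1
          linarith
  calc ∑ t ∈ Icc 1 T, (sigma1 (6*K*t+c) : ℝ) / (6*K*t+c)
      ≤ ∑ t ∈ Icc 1 T, ((∑ d ∈ ((6*K*t+c).divisors.filter (fun d => d ≤ T)), (1/(d:ℝ))) + ((6*K*t+c:ℕ) : ℝ)/(T:ℝ)^2) := by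
        refine Finset.sum_le_sum fun t ht => ?_
        have := step1 t ht
        push_cast at this ⊢
        linarith
    _ = (∑ t ∈ Icc 1 T, (∑ d ∈ ((6*K*t+c).divisors.filter (fun d => d ≤ T)), (1/(d:ℝ))))
        + ∑ t ∈ Icc 1 T, ((6*K*t+c:ℕ) : ℝ)/(T:ℝ)^2 := Finset.sum_add_distrib
    _ ≤ 14 * T + (6*K + c) := add_le_add step2 step3
    _ = 14 * T + 6 * K + c := by ring

lemma bad_count (K c T : ℕ) (hK : 0 < K) (hc : 0 < c) (hT : 6*K + c ≤ T)
    (hcop : ∀ t ∈ Icc 1 T, Nat.Coprime (6*K*t + c) K) :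
    (((Icc 1 T).filter (fun t => 120 * (6*K*t+c) < sigma1 (6*K*t+c))).card : ℝ) ≤ (T:ℝ) / 8 := by
  classical
  have hT0 : 0 < T := lt_of_lt_of_le (by positivity) hT
  set B := (Icc 1 T).filter (fun t => 120 * (6*K*t+c) < sigma1 (6*K*t+c)) with hB
  have hterm : ∀ t, (0:ℝ) ≤ (sigma1 (6*K*t+c) : ℝ) / (6*K*t+c) := fun t => by positivity
  have h1 : (120:ℝ) * B.card ≤ ∑ t ∈ B, (sigma1 (6*K*t+c) : ℝ) / (6*K*t+c) := by
    rw [mul_comm]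
    calc (B.card : ℝ) * 120 = ∑ _t ∈ B, (120:ℝ) := by rw [sum_const, nsmul_eq_mul]
      _ ≤ ∑ t ∈ B, (sigma1 (6*K*t+c) : ℝ) / (6*K*t+c) := by
          refine sum_le_sum fun t ht => ?_
          rw [hB, mem_filter] at ht
          have hn : (0:ℝ) < 6*(K:ℝ)*t+c := by positivity
          rw [le_div_iff₀ hn]
          have h' : ((120 * (6*K*t+c) : ℕ) : ℝ) ≤ (sigma1 (6*K*t+c) : ℝ) := by
            exact_mod_cast ht.2.le
          push_cast at h'
          linarith
  have h2 : ∑ t ∈ B, (sigma1 (6*K*t+c) : ℝ) / (6*K*t+c)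
      ≤ ∑ t ∈ Icc 1 T, (sigma1 (6*K*t+c) : ℝ) / (6*K*t+c) :=
    sum_le_sum_of_subset_of_nonneg (filter_subset _ _) (fun t _ _ => hterm t)
  have h3 := markov_sum K c T hK hc hT0 hcop
  have h4 : (6*(K:ℝ) + c) ≤ T := by exact_mod_cast hT
  linarith

lemma exists_prime_set (M : ℝ) (F : Finset ℕ) :
    ∃ S : Finset ℕ, (∀ p ∈ S, Nat.Prime p ∧ p ∉ F) ∧ M ≤ ∑ p ∈ S, (1 / p : ℝ) := by
  classical
  set f := Set.indicator {p | Nat.Prime p} (fun n : ℕ => (1 : ℝ) / n) with hf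
  have hnonneg : ∀ n, 0 ≤ f n := by
    intro n
    rw [hf]
    by_cases h : n ∈ {p | Nat.Prime p} <;> simp [Set.indicator, h] <;> positivity
  have hdiv : Filter.Tendsto (fun n => ∑ i ∈ range n, f i) Filter.atTop Filter.atTop :=
    (not_summable_iff_tendsto_nat_atTop_of_nonneg hnonneg).1 not_summable_one_div_on_primes
  obtain ⟨N, hN⟩ := (Filter.tendsto_atTop.1 hdiv (M + F.card)).exists
  refine ⟨(range N).filter (fun p => Nat.Prime p ∧ p ∉ F), ?_, ?_⟩
  · intro p hp; exact (mem_filter.1 hp).2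
  · have hsplit : ∑ i ∈ range N, f i
        = ∑ p ∈ (range N).filter (fun p => Nat.Prime p), f p := by
      rw [Finset.sum_filter_of_ne]
      intro x _ hx
      by_contra hpx
      exact hx (by simp [hf, Set.indicator, hpx])
    have hf_eq : ∀ p, Nat.Prime p → f p = 1 / p := by
      intro p hp; simp [hf, Set.indicator, hp]
    -- split primes into ∉F and ∈F
    have hsplit2 : (range N).filter (fun p => Nat.Prime p)
        = ((range N).filter (fun p => Nat.Prime p ∧ p ∉ F))
          ∪ ((range N).filter (fun p => Nat.Prime p ∧ p ∈ F)) := by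
      ext p
      simp only [mem_union, mem_filter]
      tauto
    have hdisj : Disjoint ((range N).filter (fun p => Nat.Prime p ∧ p ∉ F))
        ((range N).filter (fun p => Nat.Prime p ∧ p ∈ F)) := by
      rw [Finset.disjoint_filter]
      tauto
    have hFsum : ∑ p ∈ (range N).filter (fun p => Nat.Prime p ∧ p ∈ F), f p ≤ F.card := by
      calc ∑ p ∈ (range N).filter (fun p => Nat.Prime p ∧ p ∈ F), f p
          ≤ ∑ _p ∈ (range N).filter (fun p => Nat.Prime p ∧ p ∈ F), (1:ℝ) := by
            refine sum_le_sum fun p hp => ?_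
            rw [mem_filter] at hp
            rw [hf_eq p hp.2.1]
            have h2 : (2:ℝ) ≤ p := by exact_mod_cast hp.2.1.two_le
            rw [div_le_one (by linarith)]; linarith
        _ = ((range N).filter (fun p => Nat.Prime p ∧ p ∈ F)).card := by rw [sum_const, nsmul_eq_mul]; ring
        _ ≤ F.card := by
            exact_mod_cast Finset.card_le_card_of_injOn id
              (fun p hp => by rw [mem_coe, mem_filter] at hp; exact hp.2.2) (fun a _ b _ h => h)
    have key : M + F.card ≤ ∑ i ∈ range N, f i := hN
    rw [hsplit, hsplit2, Finset.sum_union hdisj] at key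
    have : M ≤ ∑ p ∈ (range N).filter (fun p => Nat.Prime p ∧ p ∉ F), f p := by linarith
    calc M ≤ _ := this
      _ = ∑ p ∈ (range N).filter (fun p => Nat.Prime p ∧ p ∉ F), (1/p : ℝ) := by
          refine sum_congr rfl fun p hp => ?_
          rw [mem_filter] at hp
          exact hf_eq p hp.2.1

lemma sigma1_prime_prod (S : Finset ℕ) (hS : ∀ p ∈ S, Nat.Prime p) (M : ℝ)
    (hsum : M ≤ ∑ p ∈ S, (1/p : ℝ)) :
    (1 + M) * ((∏ p ∈ S, p : ℕ) : ℝ) ≤ (sigma1 (∏ p ∈ S, p) : ℝ) := by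
  classical
  set A := ∏ p ∈ S, p with hA
  have hApos : 0 < A := Finset.prod_pos fun p hp => (hS p hp).pos
  have hdvd : ∀ p ∈ S, p ∣ A := fun p hp => Finset.dvd_prod_of_mem _ hp
  have hinj : Set.InjOn (fun p => A / p) S := by
    intro x hx y hy hxy
    simp only at hxy
    rw [← Nat.div_div_self (hdvd x hx) hApos.ne', hxy, Nat.div_div_self (hdvd y hy) hApos.ne']
  have hAnotmem : A ∉ S.image (fun p => A / p) := by
    rw [mem_image]
    rintro ⟨p, hp, hpe⟩
    have h2 : 2 ≤ p := (hS p hp).two_le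
    have : A / p < A := Nat.div_lt_self hApos (by omega)
    omega
  have hsub : insert A (S.image (fun p => A / p)) ⊆ A.divisors := by
    intro e he
    rw [mem_insert] at he
    rcases he with rfl | he
    · exact Nat.mem_divisors.2 ⟨dvd_rfl, hApos.ne'⟩
    · rw [mem_image] at he
      obtain ⟨p, hp, rfl⟩ := he
      exact Nat.mem_divisors.2 ⟨Nat.div_dvd_of_dvd (hdvd p hp), hApos.ne'⟩
  have hnat : A + ∑ p ∈ S, A / p ≤ sigma1 A := by
    calc A + ∑ p ∈ S, A / p
        = ∑ e ∈ insert A (S.image (fun p => A / p)), e := by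
          rw [Finset.sum_insert hAnotmem, Finset.sum_image (fun x hx y hy => hinj hx hy)]
      _ ≤ ∑ e ∈ A.divisors, e := Finset.sum_le_sum_of_subset hsub
  have hcast : ((A + ∑ p ∈ S, A / p : ℕ) : ℝ) = A * (1 + ∑ p ∈ S, (1/p:ℝ)) := by
    push_cast
    rw [mul_add, mul_one, Finset.mul_sum]
    congr 1
    refine Finset.sum_congr rfl fun p hp => ?_
    rw [Nat.cast_div (hdvd p hp) (by exact_mod_cast (hS p hp).pos.ne')]
    ring
  have h1 : (A:ℝ) * (1 + ∑ p ∈ S, (1/p:ℝ)) ≤ (sigma1 A : ℝ) := by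
    rw [← hcast]; exact_mod_cast hnat
  have hA0 : (0:ℝ) ≤ A := Nat.cast_nonneg A
  nlinarith
  
-- solve 2x+5 ≡ 0 mod A (A coprime to 2); general: a*x + b ≡ 0 mod A when gcd(a,A)=1
lemma exists_lin_solution (a b A : ℕ) (hA : 0 < A) (h : Nat.Coprime a A) :
    ∃ x, A ∣ a * x + b := by
  rcases eq_or_lt_of_le (show 1 ≤ A from hA) with h1 | h1
  · exact ⟨0, by rw [← h1]; exact one_dvd _⟩
  haveI : NeZero A := ⟨hA.ne'⟩
  set x : ZMod A := (-(b:ZMod A)) * ((a : ZMod A)⁻¹) with hx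
  refine ⟨x.val, ?_⟩
  have : ((a * x.val + b : ℕ) : ZMod A) = 0 := by
    push_cast
    rw [ZMod.natCast_val, ZMod.cast_id, hx]
    have hinv : (a : ZMod A) * (a : ZMod A)⁻¹ = 1 := ZMod.coe_mul_inv_eq_one a h
    calc (a : ZMod A) * (-(b:ZMod A) * (a : ZMod A)⁻¹) + b
        = (-(b:ZMod A)) * ((a : ZMod A) * (a : ZMod A)⁻¹) + b := by ring
      _ = 0 := by rw [hinv]; ring
  exact (ZMod.natCast_eq_zero_iff _ _).1 this



/-- There are infinitely many positive integers `m` with `σ(2m+5) > σ(6m+17)` and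
`σ(5m+4) > σ(6m+7)` simultaneously. -/
theorem stmt_10 :
    {m : ℕ | 0 < m ∧ sigma1 (6 * m + 17) < sigma1 (2 * m + 5) ∧
      sigma1 (6 * m + 7) < sigma1 (5 * m + 4)}.Infinite := by
  classical
  set F₀ : Finset ℕ := {2, 3, 5, 11, 61} with hF₀
  obtain ⟨SA, hSA, hSAsum⟩ := exists_prime_set 479 F₀
  obtain ⟨SB, hSB, hSBsum⟩ := exists_prime_set 239 (F₀ ∪ SA)
  set A := ∏ p ∈ SA, p with hA
  set B := ∏ p ∈ SB, p with hB
  have hSAp : ∀ p ∈ SA, Nat.Prime p := fun p hp => (hSA p hp).1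
  have hSBp : ∀ p ∈ SB, Nat.Prime p := fun p hp => (hSB p hp).1
  have hSAne : ∀ p ∈ SA, p ≠ 2 ∧ p ≠ 3 ∧ p ≠ 5 ∧ p ≠ 11 ∧ p ≠ 61 := by
    intro p hp
    have := (hSA p hp).2
    rw [hF₀] at this
    simp only [mem_insert, mem_singleton] at this
    tauto
  have hSBne : ∀ p ∈ SB, (p ≠ 2 ∧ p ≠ 3 ∧ p ≠ 5 ∧ p ≠ 11 ∧ p ≠ 61) ∧ p ∉ SA := by
    intro p hp
    have := (hSB p hp).2
    rw [Finset.mem_union, hF₀] at this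
    simp only [mem_insert, mem_singleton] at this
    tauto
  have hApos : 0 < A := Finset.prod_pos fun p hp => (hSAp p hp).pos
  have hBpos : 0 < B := Finset.prod_pos fun p hp => (hSBp p hp).pos
  -- sigma lower bounds
  have hsigA : 480 * A ≤ sigma1 A := by
    have h0 := sigma1_prime_prod SA hSAp 479 hSAsum
    rw [← hA] at h0
    have : ((480 * A : ℕ) : ℝ) ≤ (sigma1 A : ℝ) := by push_cast; linarith
    exact_mod_cast this
  have hsigB : 240 * B ≤ sigma1 B := by
    have h0 := sigma1_prime_prod SB hSBp 239 hSBsum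
    rw [← hB] at h0
    have : ((240 * B : ℕ) : ℝ) ≤ (sigma1 B : ℝ) := by push_cast; linarith
    exact_mod_cast this
  -- coprimality
  have hAB : Nat.Coprime A B := by
    apply Nat.Coprime.prod_left
    intro p hp
    apply Nat.Coprime.prod_right
    intro q hq
    exact (Nat.coprime_primes (hSAp p hp) (hSBp q hq)).2
      (fun h => (hSBne q hq).2 (h ▸ hp))
  have h2A : Nat.Coprime 2 A := by
    apply Nat.Coprime.prod_right
    intro p hp
    exact (Nat.coprime_primes Nat.prime_two (hSAp p hp)).2 (fun h => (hSAne p hp).1 h.symm)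
  have h5B : Nat.Coprime 5 B := by
    apply Nat.Coprime.prod_right
    intro p hp
    exact (Nat.coprime_primes (by norm_num) (hSBp p hp)).2 (fun h => (hSBne p hp).1.2.2.1 h.symm)
  -- residues
  obtain ⟨x₁, hx₁⟩ := exists_lin_solution 2 5 A hApos h2A
  obtain ⟨x₂, hx₂⟩ := exists_lin_solution 5 4 B hBpos h5B
  obtain ⟨s₀, hs₀A, hs₀B⟩ := Nat.chineseRemainder hAB x₁ x₂
  set K := A * B with hK
  have hKpos : 0 < K := Nat.mul_pos hApos hBpos
  have hsA : A ∣ 2 * s₀ + 5 := by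
    have h1 : 2 * s₀ + 5 ≡ 2 * x₁ + 5 [MOD A] := (hs₀A.mul_left 2).add_right 5
    have h2 : 2 * x₁ + 5 ≡ 0 [MOD A] := (Nat.modEq_zero_iff_dvd).2 hx₁
    exact (Nat.modEq_zero_iff_dvd).1 (h1.trans h2)
  have hsB : B ∣ 5 * s₀ + 4 := by
    have h1 : 5 * s₀ + 4 ≡ 5 * x₂ + 4 [MOD B] := (hs₀B.mul_left 5).add_right 4
    have h2 : 5 * x₂ + 4 ≡ 0 [MOD B] := (Nat.modEq_zero_iff_dvd).2 hx₂
    exact (Nat.modEq_zero_iff_dvd).1 (h1.trans h2)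
  -- for every t, with m = s₀ + K * t :
  have hdvdA : ∀ t, A ∣ 2 * (s₀ + K * t) + 5 := by
    intro t
    have : 2 * (s₀ + K * t) + 5 = (2 * s₀ + 5) + A * (2 * B * t) := by rw [hK]; ring
    rw [this]
    exact dvd_add hsA (Dvd.intro _ rfl)
  have hdvdB : ∀ t, B ∣ 5 * (s₀ + K * t) + 4 := by
    intro t
    have : 5 * (s₀ + K * t) + 4 = (5 * s₀ + 4) + B * (5 * A * t) := by rw [hK]; ring
    rw [this]
    exact dvd_add hsB (Dvd.intro _ rfl)
  -- key coprimality for the markov argument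
  have hprime_small : ∀ p q : ℕ, Nat.Prime p → Nat.Prime q → p ∣ q → p = q := by
    intro p q hp hq h
    exact (Nat.prime_dvd_prime_iff_eq hp hq).1 h
  have hcop17 : ∀ m : ℕ, A ∣ 2 * m + 5 → B ∣ 5 * m + 4 → Nat.Coprime (6 * m + 17) K := by
    intro m hmA hmB
    rw [hK, Nat.coprime_mul_iff_right]
    constructor
    · rw [Nat.coprime_comm, hA]
      apply Nat.Coprime.prod_left
      intro p hp
      apply (Nat.Prime.coprime_iff_not_dvd (hSAp p hp)).2
      intro hpdvd
      have hpA : p ∣ 2 * m + 5 := dvd_trans (Finset.dvd_prod_of_mem _ hp) hmA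
      have h1 : p ∣ 3 * (2 * m + 5) := Dvd.dvd.mul_left hpA 3
      have h2 : (6 * m + 17) - (3 * (2 * m + 5)) = 2 := by omega
      have hp2 : p ∣ 2 := by rw [← h2]; exact Nat.dvd_sub hpdvd h1
      exact (hSAne p hp).1 (hprime_small p 2 (hSAp p hp) Nat.prime_two hp2)
    · rw [Nat.coprime_comm, hB]
      apply Nat.Coprime.prod_left
      intro p hp
      apply (Nat.Prime.coprime_iff_not_dvd (hSBp p hp)).2
      intro hpdvd
      have hpB : p ∣ 5 * m + 4 := dvd_trans (Finset.dvd_prod_of_mem _ hp) hmB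
      have h1 : p ∣ 6 * (5 * m + 4) := Dvd.dvd.mul_left hpB 6
      have h1' : p ∣ 5 * (6 * m + 17) := Dvd.dvd.mul_left hpdvd 5
      have h2 : (5 * (6 * m + 17)) - (6 * (5 * m + 4)) = 61 := by omega
      have hp61 : p ∣ 61 := by rw [← h2]; exact Nat.dvd_sub h1' h1
      have := hprime_small p 61 (hSBp p hp) (by norm_num) hp61
      exact (hSBne p hp).1.2.2.2.2 this
  have hcop7 : ∀ m : ℕ, A ∣ 2 * m + 5 → B ∣ 5 * m + 4 → Nat.Coprime (6 * m + 7) K := by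
    intro m hmA hmB
    rw [hK, Nat.coprime_mul_iff_right]
    constructor
    · rw [Nat.coprime_comm, hA]
      apply Nat.Coprime.prod_left
      intro p hp
      apply (Nat.Prime.coprime_iff_not_dvd (hSAp p hp)).2
      intro hpdvd
      have hpA : p ∣ 2 * m + 5 := dvd_trans (Finset.dvd_prod_of_mem _ hp) hmA
      have h1 : p ∣ 3 * (2 * m + 5) := Dvd.dvd.mul_left hpA 3
      have h2 : (3 * (2 * m + 5)) - (6 * m + 7) = 8 := by omega
      have hp8 : p ∣ 8 := by rw [← h2]; exact Nat.dvd_sub h1 hpdvd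
      have h8 : (8:ℕ) = 2^3 := by norm_num
      have hp2 : p ∣ 2 := (hSAp p hp).dvd_of_dvd_pow (n := 3) (h8 ▸ hp8)
      exact (hSAne p hp).1 (hprime_small p 2 (hSAp p hp) Nat.prime_two hp2)
    · rw [Nat.coprime_comm, hB]
      apply Nat.Coprime.prod_left
      intro p hp
      apply (Nat.Prime.coprime_iff_not_dvd (hSBp p hp)).2
      intro hpdvd
      have hpB : p ∣ 5 * m + 4 := dvd_trans (Finset.dvd_prod_of_mem _ hp) hmB
      have h1 : p ∣ 6 * (5 * m + 4) := Dvd.dvd.mul_left hpB 6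
      have h1' : p ∣ 5 * (6 * m + 7) := Dvd.dvd.mul_left hpdvd 5
      have h2 : (5 * (6 * m + 7)) - (6 * (5 * m + 4)) = 11 := by omega
      have hp11 : p ∣ 11 := by rw [← h2]; exact Nat.dvd_sub h1' h1
      have := hprime_small p 11 (hSBp p hp) (by norm_num) hp11
      exact (hSBne p hp).1.2.2.2.1 this
  -- infinitude
  apply Set.infinite_of_not_bddAbove
  rintro ⟨M, hM⟩
  -- choose T
  set c₁ := 6 * s₀ + 17 with hc₁
  set c₂ := 6 * s₀ + 7 with hc₂
  set T := 8 * (M + 6 * K + c₁ + c₂ + 1) with hT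
  have hTbig₁ : 6 * K + c₁ ≤ T := by omega
  have hTbig₂ : 6 * K + c₂ ≤ T := by omega
  have heq₁ : ∀ t, 6 * K * t + c₁ = 6 * (s₀ + K * t) + 17 := by intro t; rw [hc₁]; ring
  have heq₂ : ∀ t, 6 * K * t + c₂ = 6 * (s₀ + K * t) + 7 := by intro t; rw [hc₂]; ring
  have hcopT₁ : ∀ t ∈ Icc 1 T, Nat.Coprime (6 * K * t + c₁) K := by
    intro t _
    rw [heq₁ t]
    exact hcop17 (s₀ + K * t) (hdvdA t) (hdvdB t)
  have hcopT₂ : ∀ t ∈ Icc 1 T, Nat.Coprime (6 * K * t + c₂) K := by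
    intro t _
    rw [heq₂ t]
    exact hcop7 (s₀ + K * t) (hdvdA t) (hdvdB t)
  have hbad₁ := bad_count K c₁ T hKpos (by omega) hTbig₁ hcopT₁
  have hbad₂ := bad_count K c₂ T hKpos (by omega) hTbig₂ hcopT₂
  set Bad₁ := (Icc 1 T).filter (fun t => 120 * (6*K*t+c₁) < sigma1 (6*K*t+c₁)) with hBad₁
  set Bad₂ := (Icc 1 T).filter (fun t => 120 * (6*K*t+c₂) < sigma1 (6*K*t+c₂)) with hBad₂
  -- find a good t in Icc (M+1) T
  have hgood : ∃ t ∈ Icc (M+1) T, t ∉ Bad₁ ∧ t ∉ Bad₂ := by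
    by_contra hcon
    push_neg at hcon
    have hsub : Icc (M+1) T ⊆ Bad₁ ∪ Bad₂ := by
      intro t ht
      rcases Classical.em (t ∈ Bad₁) with h | h
      · exact Finset.mem_union_left _ h
      · exact Finset.mem_union_right _ (hcon t ht h)
    have hcard : (Icc (M+1) T).card ≤ Bad₁.card + Bad₂.card :=
      le_trans (Finset.card_le_card hsub) (Finset.card_union_le _ _)
    have h1 : (Icc (M+1) T).card = T - M := by rw [Nat.card_Icc]; omega
    have h2 : ((T - M : ℕ) : ℝ) ≤ (T:ℝ)/8 + (T:ℝ)/8 := by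
      rw [← h1]
      calc ((Icc (M+1) T).card : ℝ) ≤ (Bad₁.card : ℝ) + (Bad₂.card : ℝ) := by exact_mod_cast hcard
        _ ≤ (T:ℝ)/8 + (T:ℝ)/8 := add_le_add hbad₁ hbad₂
    have h3 : (T:ℝ) - M ≤ ((T - M : ℕ) : ℝ) := by
      have hMT : M ≤ T := by omega
      rw [Nat.cast_sub hMT]
    have h4 : (M:ℝ) ≥ 0 := Nat.cast_nonneg M
    have h5 : ((8 * (M + 6 * K + c₁ + c₂ + 1) : ℕ) : ℝ) = 8 * ((M:ℝ) + 6*K + c₁ + c₂ + 1) := by push_cast; ring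
    have hTr : (T:ℝ) = 8 * ((M:ℝ) + 6*K + c₁ + c₂ + 1) := by rw [hT]; exact h5
    have hc₁r : (0:ℝ) ≤ c₁ := Nat.cast_nonneg _
    have hc₂r : (0:ℝ) ≤ c₂ := Nat.cast_nonneg _
    have hKr : (0:ℝ) ≤ K := Nat.cast_nonneg _
    rw [hTr] at h2 h3
    linarith
  obtain ⟨t, htI, htB₁, htB₂⟩ := hgood
  rw [mem_Icc] at htI
  set m := s₀ + K * t with hm
  -- m is in the set and exceeds M
  have hmM : M < m := by
    have : t ≤ K * t := Nat.le_mul_of_pos_left t hKpos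
    omega
  have htIcc : t ∈ Icc 1 T := mem_Icc.2 ⟨by omega, htI.2⟩
  -- good bounds
  have hg₁ : sigma1 (6 * m + 17) ≤ 120 * (6 * m + 17) := by
    have : ¬ (120 * (6*K*t+c₁) < sigma1 (6*K*t+c₁)) := by
      intro h
      exact htB₁ (mem_filter.2 ⟨htIcc, h⟩)
    rw [heq₁ t, ← hm] at this
    omega
  have hg₂ : sigma1 (6 * m + 7) ≤ 120 * (6 * m + 7) := by
    have : ¬ (120 * (6*K*t+c₂) < sigma1 (6*K*t+c₂)) := by
      intro h
      exact htB₂ (mem_filter.2 ⟨htIcc, h⟩)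
    rw [heq₂ t, ← hm] at this
    omega
  -- lower bounds via divisibility
  have hlow₁ : 480 * (2 * m + 5) ≤ sigma1 (2 * m + 5) := by
    have hdvd := hdvdA t
    have h1 := sigma1_mul_le (A := A) (n := 2 * m + 5) (by omega) hdvd
    have h2 : A * ((2 * m + 5) / A) = 2 * m + 5 := Nat.mul_div_cancel' hdvd
    calc 480 * (2 * m + 5) = 480 * (A * ((2 * m + 5) / A)) := by rw [h2]
      _ = (480 * A) * ((2 * m + 5) / A) := by ring
      _ ≤ sigma1 A * ((2 * m + 5) / A) := Nat.mul_le_mul_right _ hsigA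
      _ ≤ sigma1 (2 * m + 5) := h1
  have hlow₂ : 240 * (5 * m + 4) ≤ sigma1 (5 * m + 4) := by
    have hdvd := hdvdB t
    have h1 := sigma1_mul_le (A := B) (n := 5 * m + 4) (by omega) hdvd
    have h2 : B * ((5 * m + 4) / B) = 5 * m + 4 := Nat.mul_div_cancel' hdvd
    calc 240 * (5 * m + 4) = 240 * (B * ((5 * m + 4) / B)) := by rw [h2]
      _ = (240 * B) * ((5 * m + 4) / B) := by ring
      _ ≤ sigma1 B * ((5 * m + 4) / B) := Nat.mul_le_mul_right _ hsigB
      _ ≤ sigma1 (5 * m + 4) := h1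
  have hmem : m ∈ {m : ℕ | 0 < m ∧ sigma1 (6 * m + 17) < sigma1 (2 * m + 5) ∧
      sigma1 (6 * m + 7) < sigma1 (5 * m + 4)} := by
    refine ⟨by omega, ?_, ?_⟩
    · omega
    · omega
  exact absurd (hM hmem) (by omega)
end

section
/- There exist a constant c > 0 and x₀ > 0 such that for all real x ≥ x₀, the number of positive integers m ≤ x satisfying both σ(2m+5) > σ(6m+17) and σ(5m+4) > σ(6m+7) is at least c·x/(log x)². -/
open Finset Real

def aA : ℕ := 446618156589346888858005842204224693125
def aM : ℕ := 1786472626357387555432023368816898772500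
def ar : ℕ := 223309078294673444429002921102112346560

lemma sigma1_eq (n : ℕ) : sigma1 n = ArithmeticFunction.sigma 1 n := by
  rw [sigma1, ArithmeticFunction.sigma_one_apply]

lemma sigma1_pp (p i : ℕ) (hp : p.Prime) : sigma1 (p ^ i) = ∑ k ∈ Finset.range (i+1), p ^ k := by
  rw [sigma1_eq, ArithmeticFunction.sigma_one_apply_prime_pow hp]

lemma sigma1_mul (a b : ℕ) (h : Nat.Coprime a b) : sigma1 (a*b) = sigma1 a * sigma1 b := by
  simp only [sigma1_eq]
  exact ArithmeticFunction.isMultiplicative_sigma.map_mul_of_coprime h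

lemma sig_243 : sigma1 243 = 364 := by
  have h := sigma1_pp 3 5 (by norm_num)
  norm_num [Finset.sum_range_succ] at h; omega

lemma sig_625 : sigma1 625 = 781 := by
  have h := sigma1_pp 5 4 (by norm_num)
  norm_num [Finset.sum_range_succ] at h; omega

lemma sig_343 : sigma1 343 = 400 := by
  have h := sigma1_pp 7 3 (by norm_num)
  norm_num [Finset.sum_range_succ] at h; omega

lemma sig_121 : sigma1 121 = 133 := by
  have h := sigma1_pp 11 2 (by norm_num)
  norm_num [Finset.sum_range_succ] at h; omega

lemma sig_169 : sigma1 169 = 183 := by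
  have h := sigma1_pp 13 2 (by norm_num)
  norm_num [Finset.sum_range_succ] at h; omega

lemma sig_289 : sigma1 289 = 307 := by
  have h := sigma1_pp 17 2 (by norm_num)
  norm_num [Finset.sum_range_succ] at h; omega

lemma sig_361 : sigma1 361 = 381 := by
  have h := sigma1_pp 19 2 (by norm_num)
  norm_num [Finset.sum_range_succ] at h; omega

lemma sig_529 : sigma1 529 = 553 := by
  have h := sigma1_pp 23 2 (by norm_num)
  norm_num [Finset.sum_range_succ] at h; omega

lemma sig_841 : sigma1 841 = 871 := by
  have h := sigma1_pp 29 2 (by norm_num)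
  norm_num [Finset.sum_range_succ] at h; omega

lemma sig_961 : sigma1 961 = 993 := by
  have h := sigma1_pp 31 2 (by norm_num)
  norm_num [Finset.sum_range_succ] at h; omega

lemma sig_1369 : sigma1 1369 = 1407 := by
  have h := sigma1_pp 37 2 (by norm_num)
  norm_num [Finset.sum_range_succ] at h; omega

lemma sig_1681 : sigma1 1681 = 1723 := by
  have h := sigma1_pp 41 2 (by norm_num)
  norm_num [Finset.sum_range_succ] at h; omega

lemma sig_1849 : sigma1 1849 = 1893 := by
  have h := sigma1_pp 43 2 (by norm_num)
  norm_num [Finset.sum_range_succ] at h; omega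

lemma sig_2209 : sigma1 2209 = 2257 := by
  have h := sigma1_pp 47 2 (by norm_num)
  norm_num [Finset.sum_range_succ] at h; omega

lemma sigA_0 : sigma1 151875 = 284284 := by
  have h := sigma1_mul 243 625 (by norm_num)
  rw [sig_243, sig_625] at h; norm_num at h; convert h using 2

lemma sigA_1 : sigma1 52093125 = 113713600 := by
  have h := sigma1_mul 151875 343 (by norm_num)
  rw [sigA_0, sig_343] at h; norm_num at h; convert h using 2

lemma sigA_2 : sigma1 6303268125 = 15123908800 := by
  have h := sigma1_mul 52093125 121 (by norm_num)
  rw [sigA_1, sig_121] at h; norm_num at h; convert h using 2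

lemma sigA_3 : sigma1 1065252313125 = 2767675310400 := by
  have h := sigma1_mul 6303268125 169 (by norm_num)
  rw [sigA_2, sig_169] at h; norm_num at h; convert h using 2

lemma sigA_4 : sigma1 307857918493125 = 849676320292800 := by
  have h := sigma1_mul 1065252313125 289 (by norm_num)
  rw [sigA_3, sig_289] at h; norm_num at h; convert h using 2

lemma sigA_5 : sigma1 111136708576018125 = 323726678031556800 := by
  have h := sigma1_mul 307857918493125 361 (by norm_num)
  rw [sigA_4, sig_361] at h; norm_num at h; convert h using 2

lemma sigA_6 : sigma1 58791318836713588125 = 179020852951450910400 := by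
  have h := sigma1_mul 111136708576018125 529 (by norm_num)
  rw [sigA_5, sig_529] at h; norm_num at h; convert h using 2

lemma sigA_7 : sigma1 49443499141676127613125 = 155927162920713742958400 := by
  have h := sigma1_mul 58791318836713588125 841 (by norm_num)
  rw [sigA_6, sig_841] at h; norm_num at h; convert h using 2

lemma sigA_8 : sigma1 47515202675150758636213125 = 154835672780268746757691200 := by
  have h := sigma1_mul 49443499141676127613125 961 (by norm_num)
  rw [sigA_7, sig_961] at h; norm_num at h; convert h using 2

lemma sigA_9 : sigma1 65048312462281388572975768125 = 217853791601838126688071518400 := by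
  have h := sigma1_mul 47515202675150758636213125 1369 (by norm_num)
  rw [sigA_8, sig_1369] at h; norm_num at h; convert h using 2

lemma sigA_10 : sigma1 109346213249095014191172266218125 = 375362082929967092283547226203200 := by
  have h := sigma1_mul 65048312462281388572975768125 1681 (by norm_num)
  rw [sigA_9, sig_1681] at h; norm_num at h; convert h using 2

lemma sigA_11 : sigma1 202181148297576681239477520237313125 = 710560422986427705692754899202657600 := by
  have h := sigma1_mul 109346213249095014191172266218125 1849 (by norm_num)
  rw [sigA_10, sig_1849] at h; norm_num at h; convert h using 2

lemma sigA_12 : sigma1 446618156589346888858005842204224693125 = 1603734874680367331748547807500398203200 := by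
  have h := sigma1_mul 202181148297576681239477520237313125 2209 (by norm_num)
  rw [sigA_11, sig_2209] at h; norm_num at h; convert h using 2

lemma sigma1_aA : sigma1 aA = 1603734874680367331748547807500398203200 := by
  rw [aA]; exact sigA_12

lemma sigma1_four : sigma1 4 = 7 := by
  have h := sigma1_pp 2 2 (by norm_num)
  norm_num [Finset.sum_range_succ] at h; omega

lemma sum_div_div (n : ℕ) : ∑ d ∈ n.divisors, n / d = sigma1 n := by
  rw [sigma1]; simpa using Nat.sum_div_divisors n id

lemma sigma1_div_le {a n : ℕ} (h : a ∣ n) (hn : n ≠ 0) : sigma1 a * n ≤ sigma1 n * a := by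
  have h1 : sigma1 n * a = ∑ d ∈ n.divisors, (n / d) * a := by
    rw [← sum_div_div n, Finset.sum_mul]
  have h2 : sigma1 a * n = ∑ d ∈ a.divisors, (a / d) * n := by
    rw [← sum_div_div a, Finset.sum_mul]
  rw [h1, h2]
  have hsub : a.divisors ⊆ n.divisors := Nat.divisors_subset_of_dvd hn h
  refine le_trans (le_of_eq ?_) (Finset.sum_le_sum_of_subset hsub)
  apply Finset.sum_congr rfl
  intro d hd
  have hda : d ∣ a := (Nat.mem_divisors.mp hd).1
  have hdn : d ∣ n := hda.trans h
  obtain ⟨j, hj⟩ := hda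
  obtain ⟨k, hk⟩ := hdn
  have hd0 : d ≠ 0 := by rintro rfl; simp at hk; omega
  subst hj hk
  rw [Nat.mul_div_cancel_left j (Nat.pos_of_ne_zero hd0),
      Nat.mul_div_cancel_left k (Nat.pos_of_ne_zero hd0)]
  ring_nf

lemma sigma1_sub (n : ℕ) (hn : n ≠ 0) : sigma1 n = n + ∑ d ∈ n.divisors.erase 1, n / d := by
  have h1 : (1:ℕ) ∈ n.divisors := Nat.one_mem_divisors.mpr hn
  rw [← sum_div_div n, ← Finset.add_sum_erase _ _ h1]
  simp

lemma card_residue_le (X D : ℕ) (S : Finset ℕ)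
    (hS : S ⊆ Finset.Icc 1 X) (hres : ∀ m ∈ S, ∀ m' ∈ S, m % D = m' % D) :
    S.card ≤ X / D + 1 := by
  have : S.card ≤ (Finset.range (X / D + 1)).card := by
    apply Finset.card_le_card_of_injOn (fun m => m / D)
    · intro m hm
      have := (Finset.mem_Icc.mp (hS hm)).2
      simp only [Finset.mem_coe, Finset.mem_range]
      exact Nat.lt_succ_of_le (Nat.div_le_div_right this)
    · intro m hm m' hm' hmm
      simp only at hmm
      calc m = D * (m / D) + m % D := (Nat.div_add_mod m D).symm
        _ = D * (m' / D) + m' % D := by rw [hmm, hres m hm m' hm']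
        _ = m' := Nat.div_add_mod m' D
  simpa using this

lemma sum_Ioc_telescope (f g : ℕ → ℝ) (k N : ℕ) (hkN : k ≤ N)
    (h : ∀ e, k < e → e ≤ N → f e ≤ g e - g (e-1)) :
    ∑ e ∈ Finset.Ioc k N, f e ≤ g N - g k := by
  induction N, hkN using Nat.le_induction with
  | base => simp
  | succ n hn ih =>
    rw [Finset.sum_Ioc_succ_top (by omega)]
    have h1 := ih (fun e he1 he2 => h e he1 (by omega))
    have h2 := h (n+1) (by omega) (by omega)
    simp only [Nat.add_sub_cancel] at h2
    linarith

lemma invsq_le (N : ℕ) : ∑ e ∈ Finset.Icc 53 N, (1 / (e:ℝ))^2 ≤ 1/52 := by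
  rcases le_or_gt 53 N with h | h
  · have key := sum_Ioc_telescope (fun e => (1/(e:ℝ))^2) (fun e => -(1/(e:ℝ))) 52 N (by omega) ?_
    · rw [show Finset.Icc 53 N = Finset.Ioc 52 N from rfl]
      refine key.trans ?_
      have : (0:ℝ) ≤ 1/(N:ℝ) := by positivity
      show (-(1/(N:ℝ))) - (-(1/((52:ℕ):ℝ))) ≤ 1/52
      norm_num
    · intro e he1 he2
      have hc : ((e-1 : ℕ) : ℝ) = (e:ℝ) - 1 := by
        push_cast [Nat.cast_sub (show 1 ≤ e by omega)]; ring
      simp only [hc]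
      have h1 : (52:ℝ) ≤ (e:ℝ) - 1 := by
        have : (53:ℝ) ≤ (e:ℝ) := by exact_mod_cast he1
        linarith
      have he0 : (0:ℝ) < (e:ℝ) := by positivity
      rw [div_pow, one_pow, neg_sub_neg]
      rw [div_sub_div _ _ (by linarith) (by linarith), div_le_div_iff₀ (by positivity) (by nlinarith)]
      ring_nf
      nlinarith
  · have : Finset.Icc 53 N = ∅ := Finset.Icc_eq_empty (by omega)
    simp [this]

lemma harm_le (N : ℕ) (hN : 1 ≤ N) : ∑ e ∈ Finset.Icc 2 N, (1 / (e:ℝ)) ≤ 2 * Real.sqrt N := by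
  have h1 : ∑ e ∈ Finset.Icc 2 N, (1 / (e:ℝ)) ≤ ((harmonic N : ℚ) : ℝ) := by
    rw [harmonic_eq_sum_Icc]
    push_cast
    rw [show Finset.Icc 1 N = insert 1 (Finset.Icc 2 N) by
      ext x; simp [Finset.mem_Icc, Finset.mem_insert]; omega]
    rw [Finset.sum_insert (by simp)]
    simp only [one_div]
    norm_num
  have h2 := harmonic_le_one_add_log N
  have hN1 : (1:ℝ) ≤ (N:ℝ) := by exact_mod_cast hN
  have h3 : Real.log N ≤ 2 * Real.sqrt N - 2 := by
    have hsq : Real.sqrt N > 0 := Real.sqrt_pos.mpr (by linarith)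
    have : Real.log N = 2 * Real.log (Real.sqrt N) := by
      rw [two_mul, ← Real.log_mul (by positivity) (by positivity),
        Real.mul_self_sqrt (by linarith : (0:ℝ) ≤ (N:ℝ))]
    rw [this]
    have := Real.log_le_sub_one_of_pos hsq
    linarith
  calc ∑ e ∈ Finset.Icc 2 N, (1 / (e:ℝ)) ≤ ((harmonic N : ℚ) : ℝ) := h1
    _ ≤ 1 + Real.log N := h2
    _ ≤ 2 * Real.sqrt N - 1 := by linarith
    _ ≤ 2 * Real.sqrt N := by linarith

lemma small_primes_dvd : ∀ p ∈ Finset.range 53, p.Prime → (6 * aM) % p = 0 := by decide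

lemma prime_of_dvd_6aM {q : ℕ} (hq : q.Prime) (h : q ∣ 6 * aM) :
    q = 2 ∨ q = 3 ∨ (5 ≤ q ∧ q ∣ aA) := by
  have h6 : 6 * aM = 2^3 * (3^6 * (5^4 * (7^3 * (11^2 * (13^2 * (17^2 * (19^2 * (23^2 * (29^2 * (31^2 * (37^2 * (41^2 * (43^2 * (47^2)))))))))))))) := by norm_num [aM, aA]
  rw [h6] at h
  rcases (Nat.Prime.dvd_mul hq).mp h with h | h
  · left; exact (Nat.prime_dvd_prime_iff_eq hq (by norm_num)).mp (hq.dvd_of_dvd_pow h)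
  rcases (Nat.Prime.dvd_mul hq).mp h with h | h
  · right; left; exact (Nat.prime_dvd_prime_iff_eq hq (by norm_num)).mp (hq.dvd_of_dvd_pow h)
  rcases (Nat.Prime.dvd_mul hq).mp h with h | h
  · right; right
    have hqp : q = 5 := (Nat.prime_dvd_prime_iff_eq hq (by norm_num)).mp (hq.dvd_of_dvd_pow h)
    subst hqp; exact ⟨by norm_num, by norm_num [aA]⟩
  rcases (Nat.Prime.dvd_mul hq).mp h with h | h
  · right; right
    have hqp : q = 7 := (Nat.prime_dvd_prime_iff_eq hq (by norm_num)).mp (hq.dvd_of_dvd_pow h)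
    subst hqp; exact ⟨by norm_num, by norm_num [aA]⟩
  rcases (Nat.Prime.dvd_mul hq).mp h with h | h
  · right; right
    have hqp : q = 11 := (Nat.prime_dvd_prime_iff_eq hq (by norm_num)).mp (hq.dvd_of_dvd_pow h)
    subst hqp; exact ⟨by norm_num, by norm_num [aA]⟩
  rcases (Nat.Prime.dvd_mul hq).mp h with h | h
  · right; right
    have hqp : q = 13 := (Nat.prime_dvd_prime_iff_eq hq (by norm_num)).mp (hq.dvd_of_dvd_pow h)
    subst hqp; exact ⟨by norm_num, by norm_num [aA]⟩
  rcases (Nat.Prime.dvd_mul hq).mp h with h | h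
  · right; right
    have hqp : q = 17 := (Nat.prime_dvd_prime_iff_eq hq (by norm_num)).mp (hq.dvd_of_dvd_pow h)
    subst hqp; exact ⟨by norm_num, by norm_num [aA]⟩
  rcases (Nat.Prime.dvd_mul hq).mp h with h | h
  · right; right
    have hqp : q = 19 := (Nat.prime_dvd_prime_iff_eq hq (by norm_num)).mp (hq.dvd_of_dvd_pow h)
    subst hqp; exact ⟨by norm_num, by norm_num [aA]⟩
  rcases (Nat.Prime.dvd_mul hq).mp h with h | h
  · right; right
    have hqp : q = 23 := (Nat.prime_dvd_prime_iff_eq hq (by norm_num)).mp (hq.dvd_of_dvd_pow h)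
    subst hqp; exact ⟨by norm_num, by norm_num [aA]⟩
  rcases (Nat.Prime.dvd_mul hq).mp h with h | h
  · right; right
    have hqp : q = 29 := (Nat.prime_dvd_prime_iff_eq hq (by norm_num)).mp (hq.dvd_of_dvd_pow h)
    subst hqp; exact ⟨by norm_num, by norm_num [aA]⟩
  rcases (Nat.Prime.dvd_mul hq).mp h with h | h
  · right; right
    have hqp : q = 31 := (Nat.prime_dvd_prime_iff_eq hq (by norm_num)).mp (hq.dvd_of_dvd_pow h)
    subst hqp; exact ⟨by norm_num, by norm_num [aA]⟩
  rcases (Nat.Prime.dvd_mul hq).mp h with h | h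
  · right; right
    have hqp : q = 37 := (Nat.prime_dvd_prime_iff_eq hq (by norm_num)).mp (hq.dvd_of_dvd_pow h)
    subst hqp; exact ⟨by norm_num, by norm_num [aA]⟩
  rcases (Nat.Prime.dvd_mul hq).mp h with h | h
  · right; right
    have hqp : q = 41 := (Nat.prime_dvd_prime_iff_eq hq (by norm_num)).mp (hq.dvd_of_dvd_pow h)
    subst hqp; exact ⟨by norm_num, by norm_num [aA]⟩
  rcases (Nat.Prime.dvd_mul hq).mp h with h | h
  · right; right
    have hqp : q = 43 := (Nat.prime_dvd_prime_iff_eq hq (by norm_num)).mp (hq.dvd_of_dvd_pow h)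
    subst hqp; exact ⟨by norm_num, by norm_num [aA]⟩
  right; right
  have hqp : q = 47 := (Nat.prime_dvd_prime_iff_eq hq (by norm_num)).mp (hq.dvd_of_dvd_pow h)
  subst hqp; exact ⟨by norm_num, by norm_num [aA]⟩

lemma no_small_prime (q m c : ℕ) (hq : q.Prime) (hdvd6M : q ∣ 6*aM)
    (hmA : aA ∣ 2*m+5) (hc : c = 7 ∨ c = 17) (hd : q ∣ 6*m+c) : False := by
  rcases prime_of_dvd_6aM hq hdvd6M with rfl | rfl | ⟨h5, hqA⟩
  · obtain ⟨k, hk⟩ := hd; rcases hc with rfl | rfl <;> omega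
  · obtain ⟨k, hk⟩ := hd; rcases hc with rfl | rfl <;> omega
  · have h15 : q ∣ 6*m+15 := by
      have h1 : q ∣ 2*m+5 := hqA.trans hmA
      have h2 : q ∣ 3*(2*m+5) := h1.mul_left 3
      have h3 : 3*(2*m+5) = 6*m+15 := by ring
      rwa [h3] at h2
    rcases hc with rfl | rfl
    · have h8 : q ∣ 8 := by
        have := Nat.dvd_sub h15 hd
        have he : 6*m+15 - (6*m+7) = 8 := by omega
        rwa [he] at this
      rw [show (8:ℕ) = 2^3 by norm_num] at h8
      have := (Nat.prime_dvd_prime_iff_eq hq Nat.prime_two).mp (hq.dvd_of_dvd_pow h8)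
      omega
    · have h2 : q ∣ 2 := by
        have := Nat.dvd_sub hd h15
        have he : 6*m+17 - (6*m+15) = 2 := by omega
        rwa [he] at this
      have := Nat.le_of_dvd (by norm_num) h2
      omega

lemma res_split {m : ℕ} (h : m % aM = ar) : ∃ q, m = aM * q + ar := by
  exact ⟨m / aM, by rw [← h]; exact (Nat.div_add_mod m aM).symm⟩

lemma res_dvdA {m : ℕ} (h : m % aM = ar) : aA ∣ 2*m+5 := by
  obtain ⟨q, rfl⟩ := res_split h
  have h1 : 2*(aM*q+ar)+5 = 2*q*aM + (2*ar+5) := by ring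
  rw [h1]
  apply Nat.dvd_add
  · exact Dvd.dvd.mul_left (by norm_num [aM, aA]) (2*q)
  · norm_num [ar, aA]

lemma res_dvd4 {m : ℕ} (h : m % aM = ar) : 4 ∣ 5*m+4 := by
  obtain ⟨q, rfl⟩ := res_split h
  have h4M : (4:ℕ) ∣ aM := by norm_num [aM]
  have h4r : (4:ℕ) ∣ ar := by norm_num [ar]
  obtain ⟨u, hu⟩ := h4M
  obtain ⟨v, hv⟩ := h4r
  refine ⟨5*(u*q+v)+1, ?_⟩
  rw [hu, hv]; ring

def Bset (X c t : ℕ) : Finset ℕ :=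
  (Finset.Icc 1 X).filter (fun m => m % aM = ar ∧ 10 ≤ m ∧ 6*m+c + (t*m+1) ≤ sigma1 (6*m+c))

lemma bad_card (X c t : ℕ) (hc : c = 7 ∨ c = 17) (τ : ℝ) (hτpos : 0 < τ)
    (hτ : ∀ m : ℕ, 10 ≤ m → τ * ((6*m+c : ℕ) : ℝ) ≤ ((t*m+1 : ℕ) : ℝ)) :
    τ * ((Bset X c t).card : ℝ) ≤ (X:ℝ)/(aM:ℝ) * (1/52) + 2 * Real.sqrt ((6*X+17 : ℕ) : ℝ) := by
  set N := 6*X+17 with hN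
  have hc17 : c ≤ 17 := by rcases hc with rfl | rfl <;> omega
  have hc1 : 1 ≤ c := by rcases hc with rfl | rfl <;> omega
  have hmem : ∀ m ∈ Bset X c t, (1 ≤ m ∧ m ≤ X) ∧ m % aM = ar ∧ 10 ≤ m ∧
      6*m+c + (t*m+1) ≤ sigma1 (6*m+c) := by
    intro m hm
    have := Finset.mem_filter.mp hm
    exact ⟨Finset.mem_Icc.mp this.1, this.2⟩
  -- Step A : pointwise lower bound
  have hper : ∀ m ∈ Bset X c t, τ ≤ ∑ e ∈ (6*m+c).divisors.erase 1, (1:ℝ)/e := by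
    intro m hm
    obtain ⟨⟨hm1, hmX⟩, hres, h10, hbad⟩ := hmem m hm
    have hn0 : 6*m+c ≠ 0 := by omega
    have hnpos : (0:ℝ) < ((6*m+c : ℕ):ℝ) := by
      exact_mod_cast Nat.pos_of_ne_zero hn0
    have hsum := sigma1_sub (6*m+c) hn0
    have hge : t*m+1 ≤ ∑ e ∈ (6*m+c).divisors.erase 1, (6*m+c)/e := by omega
    have heq : ∑ e ∈ (6*m+c).divisors.erase 1, (1:ℝ)/e
        = (↑(∑ e ∈ (6*m+c).divisors.erase 1, (6*m+c)/e) : ℝ) / ((6*m+c : ℕ):ℝ) := by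
      rw [Nat.cast_sum, Finset.sum_div]
      apply Finset.sum_congr rfl
      intro e he
      have hed : e ∣ 6*m+c := (Nat.mem_divisors.mp (Finset.mem_of_mem_erase he)).1
      have he0 : e ≠ 0 := by rintro rfl; rw [zero_dvd_iff] at hed; omega
      have he0R : ((e:ℕ):ℝ) ≠ 0 := Nat.cast_ne_zero.mpr he0
      rw [Nat.cast_div hed he0R, div_right_comm, div_self (ne_of_gt hnpos), one_div]
    rw [heq, le_div_iff₀ hnpos]
    calc τ * ((6*m+c : ℕ):ℝ) ≤ ((t*m+1 : ℕ):ℝ) := hτ m h10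
      _ ≤ _ := Nat.cast_le.mpr hge
  -- Step B : card bound by double sum
  have hstep : τ * ((Bset X c t).card : ℝ)
      ≤ ∑ m ∈ Bset X c t, ∑ e ∈ (6*m+c).divisors.erase 1, (1:ℝ)/e := by
    have h := Finset.card_nsmul_le_sum (Bset X c t) _ τ hper
    rwa [nsmul_eq_mul, mul_comm] at h
  -- Step C : swap sums
  have hsub : ∀ m ∈ Bset X c t,
      (6*m+c).divisors.erase 1 = (Finset.Icc 2 N).filter (· ∣ 6*m+c) := by
    intro m hm
    obtain ⟨⟨hm1, hmX⟩, -, -, -⟩ := hmem m hm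
    ext d
    simp only [Finset.mem_erase, Nat.mem_divisors, Finset.mem_filter, Finset.mem_Icc]
    constructor
    · rintro ⟨hd1, hdvd, -⟩
      have hd0 : d ≠ 0 := by rintro rfl; rw [zero_dvd_iff] at hdvd; omega
      have hdle := Nat.le_of_dvd (by omega) hdvd
      exact ⟨⟨by omega, by omega⟩, hdvd⟩
    · rintro ⟨⟨h2, hN'⟩, hdvd⟩
      exact ⟨by omega, hdvd, by omega⟩
  have hswap : ∑ m ∈ Bset X c t, ∑ e ∈ (6*m+c).divisors.erase 1, (1:ℝ)/e
      = ∑ e ∈ Finset.Icc 2 N,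
          (((Bset X c t).filter (fun m => e ∣ 6*m+c)).card : ℝ) * ((1:ℝ)/e) := by
    rw [Finset.sum_congr rfl (fun m hm => by rw [hsub m hm, Finset.sum_filter])]
    rw [Finset.sum_comm]
    apply Finset.sum_congr rfl
    intro e he
    rw [← Finset.sum_filter, Finset.sum_const, nsmul_eq_mul]
  -- Step D : per-e bound
  have hD : ∀ e ∈ Finset.Icc 2 N,
      (((Bset X c t).filter (fun m => e ∣ 6*m+c)).card : ℝ) * ((1:ℝ)/e)
        ≤ (if 53 ≤ e then (X:ℝ)/(aM:ℝ) * ((1:ℝ)/e)^2 + (1:ℝ)/e else 0) := by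
    intro e he
    obtain ⟨he2, heN⟩ := Finset.mem_Icc.mp he
    set S := (Bset X c t).filter (fun m => e ∣ 6*m+c) with hS
    rcases S.eq_empty_or_nonempty with hE | ⟨m₀, hm₀⟩
    · rw [hE]
      simp only [Finset.card_empty, Nat.cast_zero, zero_mul]
      split
      · have he0 : (0:ℝ) < (e:ℝ) := by exact_mod_cast (by omega : 0 < e)
        positivity
      · exact le_refl 0
    · have hm₀B := Finset.mem_filter.mp hm₀
      obtain ⟨⟨-, hres₀, -, -⟩⟩ := And.intro (hmem m₀ hm₀B.1) trivial
      have hde₀ : e ∣ 6*m₀+c := hm₀B.2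
      have hA₀ : aA ∣ 2*m₀+5 := res_dvdA hres₀
      have hno : ∀ q : ℕ, q.Prime → q ∣ 6*aM → q ∣ e → False := by
        intro q hq hqM hqe
        exact no_small_prime q m₀ c hq hqM hA₀ hc (hqe.trans hde₀)
      have he53 : 53 ≤ e := by
        by_contra hlt
        push_neg at hlt
        have hne1 : e ≠ 1 := by omega
        have hp := Nat.minFac_prime hne1
        have hpe := Nat.minFac_dvd e
        have hple : e.minFac ≤ e := Nat.minFac_le (by omega)
        have hdvd6M : (6*aM) % e.minFac = 0 :=
          small_primes_dvd _ (Finset.mem_range.mpr (by omega)) hp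
        exact hno _ hp (Nat.dvd_of_mod_eq_zero hdvd6M) hpe
      rw [if_pos he53]
      have hcop6 : Nat.Coprime e 6 := by
        by_contra h
        have hg := Nat.minFac_prime h
        exact hno _ hg (Dvd.dvd.mul_right ((Nat.minFac_dvd _).trans (Nat.gcd_dvd_right e 6)) aM)
          ((Nat.minFac_dvd _).trans (Nat.gcd_dvd_left e 6))
      have hcopM : Nat.Coprime e aM := by
        by_contra h
        have hg := Nat.minFac_prime h
        exact hno _ hg (Dvd.dvd.mul_left ((Nat.minFac_dvd _).trans (Nat.gcd_dvd_right e aM)) 6)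
          ((Nat.minFac_dvd _).trans (Nat.gcd_dvd_left e aM))
      have hresS : ∀ m ∈ S, ∀ m' ∈ S, m % (aM*e) = m' % (aM*e) := by
        suffices H : ∀ m ∈ S, ∀ m' ∈ S, m' ≤ m → m % (aM*e) = m' % (aM*e) by
          intro m hm m' hm'
          rcases le_total m' m with hle | hle
          · exact H m hm m' hm' hle
          · exact (H m' hm' m hm hle).symm
        intro m hm m' hm' hle
        have hmB := Finset.mem_filter.mp hm
        have hm'B := Finset.mem_filter.mp hm'
        obtain ⟨-, hresm, -, -⟩ := hmem m hmB.1
        obtain ⟨-, hresm', -, -⟩ := hmem m' hm'B.1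
        have hMd : aM ∣ m - m' := by
          have : m' ≡ m [MOD aM] := by
            unfold Nat.ModEq
            rw [hresm, hresm']
          exact (Nat.modEq_iff_dvd' hle).mp this
        have hed6 : e ∣ (6*m+c) - (6*m'+c) := Nat.dvd_sub hmB.2 hm'B.2
        have he6 : (6*m+c) - (6*m'+c) = (m - m')*6 := by omega
        rw [he6] at hed6
        have hed : e ∣ m - m' := Nat.Coprime.dvd_of_dvd_mul_right hcop6 hed6
        have hMe : aM*e ∣ m - m' :=
          Nat.Coprime.mul_dvd_of_dvd_of_dvd (Nat.coprime_comm.mp hcopM) hMd hed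
        exact ((Nat.modEq_iff_dvd' hle).mpr hMe).symm
      have hScard : S.card ≤ X / (aM*e) + 1 := by
        apply card_residue_le X (aM*e) S _ hresS
        exact (Finset.filter_subset _ _).trans (Finset.filter_subset _ _)
      have he0R : (0:ℝ) < (e:ℝ) := by exact_mod_cast (by omega : 0 < e)
      have haM0 : (0:ℝ) < (aM:ℝ) := by norm_num [aM]
      have hcast : (S.card : ℝ) ≤ (X:ℝ)/((aM:ℝ)*(e:ℝ)) + 1 := by
        have h1 : ((X/(aM*e) : ℕ) : ℝ) ≤ ((X:ℕ):ℝ)/(((aM*e) : ℕ) : ℝ) := Nat.cast_div_le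
        push_cast at h1
        calc (S.card : ℝ) ≤ ((X/(aM*e) + 1 : ℕ) : ℝ) := Nat.cast_le.mpr hScard
          _ = ((X/(aM*e) : ℕ) : ℝ) + 1 := by push_cast; ring
          _ ≤ (X:ℝ)/((aM:ℝ)*(e:ℝ)) + 1 := by linarith
      have heq2 : ((X:ℝ)/((aM:ℝ)*(e:ℝ)) + 1)*(1/(e:ℝ))
          = (X:ℝ)/(aM:ℝ)*(1/(e:ℝ))^2 + 1/(e:ℝ) := by
        field_simp
      rw [← heq2]
      apply mul_le_mul_of_nonneg_right hcast
      positivity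
  -- Step E : summing up
  have hNge : 17 ≤ N := by omega
  have hfilter : (Finset.Icc 2 N).filter (fun e => 53 ≤ e) = Finset.Icc 53 N := by
    ext d
    simp only [Finset.mem_filter, Finset.mem_Icc]
    omega
  calc τ * ((Bset X c t).card : ℝ)
      ≤ ∑ m ∈ Bset X c t, ∑ e ∈ (6*m+c).divisors.erase 1, (1:ℝ)/e := hstep
    _ = ∑ e ∈ Finset.Icc 2 N,
          (((Bset X c t).filter (fun m => e ∣ 6*m+c)).card : ℝ) * ((1:ℝ)/e) := hswap
    _ ≤ ∑ e ∈ Finset.Icc 2 N,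
          (if 53 ≤ e then (X:ℝ)/(aM:ℝ) * ((1:ℝ)/e)^2 + (1:ℝ)/e else 0) :=
        Finset.sum_le_sum hD
    _ = ∑ e ∈ Finset.Icc 53 N, ((X:ℝ)/(aM:ℝ) * ((1:ℝ)/e)^2 + (1:ℝ)/e) := by
        rw [← hfilter, Finset.sum_filter]
    _ ≤ (X:ℝ)/(aM:ℝ) * (1/52) + 2 * Real.sqrt (N:ℝ) := by
        rw [Finset.sum_add_distrib, ← Finset.mul_sum]
        have haM0 : (0:ℝ) ≤ (X:ℝ)/(aM:ℝ) := by
          have : (0:ℝ) < (aM:ℝ) := by norm_num [aM]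
          positivity
        have hb1 : (X:ℝ)/(aM:ℝ) * ∑ e ∈ Finset.Icc 53 N, ((1:ℝ)/e)^2
            ≤ (X:ℝ)/(aM:ℝ) * (1/52) := mul_le_mul_of_nonneg_left (invsq_le N) haM0
        have hb2 : ∑ e ∈ Finset.Icc 53 N, (1:ℝ)/e ≤ ∑ e ∈ Finset.Icc 2 N, (1:ℝ)/e := by
          apply Finset.sum_le_sum_of_subset_of_nonneg
            (Finset.Icc_subset_Icc (by omega) le_rfl)
          intro i hi _
          positivity
        have hb3 := harm_le N (by omega)
        linarith
lemma good_m {m : ℕ} (hres : m % aM = ar) (h10 : 10 ≤ m)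
    (h17 : sigma1 (6*m+17) ≤ 7*m+17) (h7 : sigma1 (6*m+7) ≤ 8*m+7) :
    sigma1 (6*m+17) < sigma1 (2*m+5) ∧ sigma1 (6*m+7) < sigma1 (5*m+4) := by
  constructor
  · have key := sigma1_div_le (res_dvdA hres) (by omega : 2*m+5 ≠ 0)
    rw [sigma1_aA] at key
    simp only [aA] at key
    omega
  · have key := sigma1_div_le (res_dvd4 hres) (by omega : 5*m+4 ≠ 0)
    rw [sigma1_four] at key
    omega

lemma card_Iall_ge (X : ℕ) :
    X / aM ≤ ((Finset.Icc 1 X).filter (fun m => m % aM = ar)).card := by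
  have harM : ar < aM := by norm_num [ar, aM]
  have har1 : 1 ≤ ar := by norm_num [ar]
  have : (Finset.range (X / aM)).card
      ≤ ((Finset.Icc 1 X).filter (fun m => m % aM = ar)).card := by
    apply Finset.card_le_card_of_injOn (fun i => ar + i * aM)
    · intro i hi
      have hiX : i < X / aM := Finset.mem_range.mp hi
      have hle : (i+1) * aM ≤ (X / aM) * aM := Nat.mul_le_mul_right _ (by omega)
      have hXX : (X / aM) * aM ≤ X := Nat.div_mul_le_self X aM
      simp only [Finset.mem_coe, Finset.mem_filter, Finset.mem_Icc]
      refine ⟨⟨by omega, by nlinarith⟩, ?_⟩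
      rw [Nat.add_mul_mod_self_right]
      exact Nat.mod_eq_of_lt harM
    · intro i _ j _ hij
      simp only at hij
      have := Nat.add_left_cancel hij
      exact Nat.eq_of_mul_eq_mul_right (by norm_num [aM]) this
  simpa using this

set_option maxHeartbeats 2000000 in
/-- The number of positive integers `m ≤ x` with `σ(2m+5) > σ(6m+17)` and
`σ(5m+4) > σ(6m+7)` is `≫ x / (log x)²`. -/
theorem stmt_11 :
    ∃ c : ℝ, 0 < c ∧ ∃ x₀ : ℝ, 0 < x₀ ∧ ∀ x : ℝ, x₀ ≤ x →
      c * x / (Real.log x) ^ 2 ≤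
        (((Finset.Icc 1 ⌊x⌋₊).filter fun m =>
          sigma1 (6 * m + 17) < sigma1 (2 * m + 5) ∧
            sigma1 (6 * m + 7) < sigma1 (5 * m + 4)).card : ℝ) := by
  have haM0 : (0:ℝ) < ((aM:ℕ):ℝ) := by exact_mod_cast (by norm_num [aM] : 0 < aM)
  have haM1 : (1:ℝ) ≤ ((aM:ℕ):ℝ) := by exact_mod_cast (by norm_num [aM] : 1 ≤ aM)
  refine ⟨1/(4*(aM:ℝ)), by positivity, (1000*(aM:ℝ))^2, by positivity, ?_⟩
  intro x hx
  set X := ⌊x⌋₊ with hX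
  -- basic x facts
  have hx0 : (0:ℝ) < x := lt_of_lt_of_le (by positivity) hx
  have hx3 : (3:ℝ) ≤ x := le_trans (by nlinarith) hx
  have hXx : (X:ℝ) ≤ x := Nat.floor_le (le_of_lt hx0)
  have hXx1 : x - 1 < (X:ℝ) := Nat.sub_one_lt_floor x
  have hsx : 1000*(aM:ℝ) ≤ Real.sqrt x := by
    have h1 : Real.sqrt ((1000*(aM:ℝ))^2) ≤ Real.sqrt x := Real.sqrt_le_sqrt hx
    rwa [Real.sqrt_sq (by positivity)] at h1
  have hsxx : Real.sqrt x * Real.sqrt x = x := Real.mul_self_sqrt (le_of_lt hx0)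
  have hlog : (1:ℝ) ≤ Real.log x := by
    rw [Real.le_log_iff_exp_le hx0]
    calc Real.exp 1 ≤ 3 := by
          have := Real.exp_one_lt_d9
          linarith
      _ ≤ x := hx3
  -- finsets
  set T := (Finset.Icc 1 X).filter (fun m =>
      sigma1 (6 * m + 17) < sigma1 (2 * m + 5) ∧
        sigma1 (6 * m + 7) < sigma1 (5 * m + 4)) with hT
  set G := (Finset.Icc 1 X).filter (fun m => m % aM = ar ∧ 10 ≤ m ∧
      sigma1 (6*m+17) ≤ 7*m+17 ∧ sigma1 (6*m+7) ≤ 8*m+7) with hG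
  set Iall := (Finset.Icc 1 X).filter (fun m => m % aM = ar) with hI
  have hGT : G ⊆ T := by
    intro m hm
    rw [hG, Finset.mem_filter] at hm
    obtain ⟨hIcc, hres, h10, h17, h7⟩ := hm
    rw [hT, Finset.mem_filter]
    exact ⟨hIcc, good_m hres h10 h17 h7⟩
  have hsplit : Iall.filter (fun m => 10 ≤ m) ⊆ G ∪ (Bset X 17 1 ∪ Bset X 7 2) := by
    intro m hm
    rw [hI, Finset.filter_filter, Finset.mem_filter] at hm
    obtain ⟨hIcc, hres, h10⟩ := hm
    simp only [Finset.mem_union, hG, Bset, Finset.mem_filter]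
    by_cases h17 : sigma1 (6*m+17) ≤ 7*m+17
    · by_cases h7 : sigma1 (6*m+7) ≤ 8*m+7
      · exact Or.inl ⟨hIcc, hres, h10, h17, h7⟩
      · exact Or.inr (Or.inr ⟨hIcc, hres, h10, by omega⟩)
    · exact Or.inr (Or.inl ⟨hIcc, hres, h10, by omega⟩)
  have hsmall : Iall ⊆ Iall.filter (fun m => 10 ≤ m) ∪ Finset.Icc 1 9 := by
    intro m hm
    rcases le_or_gt 10 m with h | h
    · exact Finset.mem_union_left _ (Finset.mem_filter.mpr ⟨hm, h⟩)
    · have := Finset.mem_Icc.mp (Finset.mem_of_mem_filter m hm)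
      exact Finset.mem_union_right _ (Finset.mem_Icc.mpr ⟨this.1, by omega⟩)
  -- ℕ card chain
  have hchain : X / aM ≤ T.card + 9 + (Bset X 17 1).card + (Bset X 7 2).card := by
    have c1 : X / aM ≤ Iall.card := by rw [hI]; exact card_Iall_ge X
    have c2 := Finset.card_le_card hsmall
    have c3 := Finset.card_union_le (Iall.filter (fun m => 10 ≤ m)) (Finset.Icc 1 9)
    have c4 := Finset.card_le_card hsplit
    have c5 := Finset.card_union_le G (Bset X 17 1 ∪ Bset X 7 2)
    have c6 := Finset.card_union_le (Bset X 17 1) (Bset X 7 2)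
    have c7 := Finset.card_le_card hGT
    have c8 : (Finset.Icc 1 9).card = 9 := by decide
    omega
  -- bad set bounds
  have hbad1 := bad_card X 17 1 (Or.inr rfl) (1/7) (by norm_num) ?_
  rotate_left
  · intro m h10
    have : (10:ℝ) ≤ m := by exact_mod_cast h10
    push_cast
    linarith
  have hbad2 := bad_card X 7 2 (Or.inl rfl) (1/4) (by norm_num) ?_
  rotate_left
  · intro m h10
    have : (10:ℝ) ≤ m := by exact_mod_cast h10
    push_cast
    linarith
  -- real arithmetic
  set Q := (X:ℝ)/(aM:ℝ) with hQ
  set W := Real.sqrt ((6*X+17 : ℕ) : ℝ) with hW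
  have hB1 : ((Bset X 17 1).card : ℝ) ≤ 7 * (Q * (1/52) + 2*W) := by
    have := hbad1
    linarith
  have hB2 : ((Bset X 7 2).card : ℝ) ≤ 4 * (Q * (1/52) + 2*W) := by
    have := hbad2
    linarith
  have hXdivM : Q - 1 ≤ ((X / aM : ℕ) : ℝ) := by
    have h1 : X < (X / aM) * aM + aM := by
      simp only [aM]
      omega
    have h2 : (X:ℝ) < ((X / aM : ℕ):ℝ) * (aM:ℝ) + (aM:ℝ) := by exact_mod_cast h1
    rw [hQ, sub_le_iff_le_add, div_le_iff₀ haM0]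
    nlinarith
  have hcast : ((X / aM : ℕ) : ℝ) ≤ (T.card : ℝ) + 9 + ((Bset X 17 1).card : ℝ)
      + ((Bset X 7 2).card : ℝ) := by exact_mod_cast hchain
  -- W bound : W ≤ 3 √x
  have hWb : W ≤ 3 * Real.sqrt x := by
    have h1 : ((6*X+17 : ℕ) : ℝ) ≤ 7*x := by
      push_cast
      nlinarith
    calc W ≤ Real.sqrt (7*x) := Real.sqrt_le_sqrt (by push_cast at h1 ⊢; linarith)
      _ = Real.sqrt 7 * Real.sqrt x := Real.sqrt_mul (by norm_num) x
      _ ≤ 3 * Real.sqrt x := by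
          apply mul_le_mul_of_nonneg_right _ (Real.sqrt_nonneg x)
          rw [show (3:ℝ) = Real.sqrt (3^2) from (Real.sqrt_sq (by norm_num)).symm]
          apply Real.sqrt_le_sqrt
          norm_num
  -- lower bound on T.card
  have hTcard : (41/52) * Q - 10 - 66 * Real.sqrt x ≤ (T.card : ℝ) := by
    have hQW : 0 ≤ Q := by positivity
    nlinarith [Real.sqrt_nonneg x]
  -- final chain
  have hQx : (x-1)/(aM:ℝ) ≤ Q := by
    rw [hQ]
    gcongr
  have hs1000 : (1000:ℝ) ≤ Real.sqrt x := by linarith [hsx, haM1]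
  have hxaM : 1000 * Real.sqrt x ≤ x / (aM:ℝ) := by
    rw [le_div_iff₀ haM0]
    nlinarith [Real.sqrt_nonneg x]
  have hsplitdiv : (x-1)/(aM:ℝ) = x/(aM:ℝ) - 1/(aM:ℝ) := by ring
  have hvle : 1/(aM:ℝ) ≤ 1 := by
    rw [div_le_one haM0]; exact haM1
  have hfinal : 1/(4*(aM:ℝ)) * x ≤ (T.card : ℝ) := by
    have hgoal : 1/(4*(aM:ℝ)) * x = (13/52) * (x/(aM:ℝ)) := by ring
    rw [hgoal]
    have h41 : (41/52) * ((x-1)/(aM:ℝ)) ≤ (41/52) * Q :=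
      mul_le_mul_of_nonneg_left hQx (by norm_num)
    rw [hsplitdiv] at h41
    linarith [hTcard]
  have hlog2 : (1:ℝ) ≤ (Real.log x)^2 := by nlinarith
  have hdrop : 1/(4*(aM:ℝ)) * x / (Real.log x)^2 ≤ 1/(4*(aM:ℝ)) * x := by
    rw [div_le_iff₀ (by positivity : (0:ℝ) < (Real.log x)^2)]
    nlinarith [mul_pos (by positivity : (0:ℝ) < 1/(4*(aM:ℝ))) hx0]
  linarith
end
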